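/- arXiv:2002.07939 — 8 statements merged into one kernel-verified Lean document; each statement's English description precedes it below -/
import Mathlib

section
/- For any p > 1 and any non-negative real sequence (a_n), the classical discrete Hardy inequality holds: the sum over n of ((1/n) * sum_{k=1}^n a_k)^p is at most (p/(p-1))^p times the sum over n of a_n^p. -/
open MeasureTheory Finset

section aux

variable {p : ℝ}

private lemma hardy_key (hp : 1 < p) (a : ℕ → ℝ) (ha : ∀ n, 0 ≤ a n) (n : ℕ) :
    (p - 1) * ((∑ k ∈ Finset.range (n + 1), a k) / (n + 1 : ℝ)) ^ p ≤
      p * (a n * ((∑ k ∈ Finset.range (n + 1), a k) / (n + 1 : ℝ)) ^ (p - 1))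
      + ((n : ℝ) * ((∑ k ∈ Finset.range n, a k) / (n : ℝ)) ^ p
          - ((n + 1 : ℝ)) * ((∑ k ∈ Finset.range (n + 1), a k) / (n + 1 : ℝ)) ^ p) := by
  have hp0 : (0 : ℝ) < p := lt_trans one_pos hp
  set S : ℝ := ∑ k ∈ Finset.range n, a k with hS
  have hSnn : 0 ≤ S := Finset.sum_nonneg fun k _ => ha k
  have hsum : ∑ k ∈ Finset.range (n + 1), a k = S + a n := by
    rw [Finset.sum_range_succ]
  set A : ℝ := (∑ k ∈ Finset.range (n + 1), a k) / (n + 1 : ℝ) with hA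
  have hAnn : 0 ≤ A := by
    apply div_nonneg (Finset.sum_nonneg fun k _ => ha k) (by positivity)
  set x : ℝ := S / (n : ℝ) with hx
  have hxnn : 0 ≤ x := by
    rcases Nat.eq_zero_or_pos n with h | h
    · simp [hx, h]
    · exact div_nonneg hSnn (by positivity)
  have hnx : (n : ℝ) * x = S := by
    rcases Nat.eq_zero_or_pos n with h | h
    · have : S = 0 := by simp [hS, h]
      simp [h, this]
    · rw [hx]
      have hn0 : (n : ℝ) ≠ 0 := by positivity
      field_simp
  have ha_eq : a n = (n + 1 : ℝ) * A - S := by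
    rw [hA, hsum]
    field_simp
    ring
  have hp1ne : p - 1 ≠ 0 := ne_of_gt (by linarith)
  have hpne : p ≠ 0 := ne_of_gt hp0
  set B : ℝ := A ^ (p - 1) with hB
  have hBnn : 0 ≤ B := Real.rpow_nonneg hAnn _
  have hAB : A * B = A ^ p := by
    rcases eq_or_lt_of_le hAnn with h | h
    · rw [hB, ← h, Real.zero_rpow hp1ne, mul_zero, Real.zero_rpow hpne]
    · have hpeq : A ^ p = A ^ (1 + (p - 1)) := by ring_nf
      rw [hpeq, Real.rpow_add h, Real.rpow_one, hB]
  -- Young's inequality: x * B ≤ x^p / p + A^p / q with q = p/(p-1)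
  have hpq : p.HolderConjugate (p / (p - 1)) := Real.HolderConjugate.conjExponent hp
  have hyoung : x * B ≤ x ^ p / p + A ^ p / (p / (p - 1)) := by
    have := Real.young_inequality_of_nonneg hxnn hBnn hpq
    have hBq : B ^ (p / (p - 1)) = A ^ p := by
      rw [hB, ← Real.rpow_mul hAnn]
      congr 1
      field_simp
    rw [hBq] at this
    exact this
  have hq : A ^ p / (p / (p - 1)) = (p - 1) / p * A ^ p := by
    rw [div_div_eq_mul_div]
    ring
  rw [hq] at hyoung
  -- multiply Young by p * n :
  have hyoung' : p * (n : ℝ) * (x * B) ≤ (n : ℝ) * x ^ p + (n : ℝ) * (p - 1) * A ^ p := by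
    have hpn : (0 : ℝ) ≤ p * n := by positivity
    have := mul_le_mul_of_nonneg_left hyoung hpn
    calc p * (n : ℝ) * (x * B) = p * n * (x * B) := rfl
      _ ≤ p * n * (x ^ p / p + (p - 1) / p * A ^ p) := this
      _ = (n : ℝ) * x ^ p + (n : ℝ) * (p - 1) * A ^ p := by
          field_simp
  -- now conclude by linear arithmetic
  have hSB : p * S * B ≤ (n : ℝ) * x ^ p + (n : ℝ) * (p - 1) * A ^ p := by
    calc p * S * B = p * (n : ℝ) * (x * B) := by rw [← hnx]; ring
      _ ≤ _ := hyoung'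
  rw [ha_eq]
  have expand : p * (((n + 1 : ℝ) * A - S) * B) = p * (n + 1 : ℝ) * (A * B) - p * S * B := by
    ring
  rw [expand, hAB]
  nlinarith [hSB]

private lemma hardy_finite (hp : 1 < p) (a : ℕ → ℝ) (ha : ∀ n, 0 ≤ a n) (N : ℕ) :
    ∑ n ∈ Finset.range N, ((1 / (n + 1 : ℝ)) * ∑ k ∈ Finset.range (n + 1), a k) ^ p
      ≤ (p / (p - 1)) ^ p * ∑ n ∈ Finset.range N, a n ^ p := by
  have hp0 : (0 : ℝ) < p := lt_trans one_pos hp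
  have hp1 : (0 : ℝ) < p - 1 := by linarith
  set A : ℕ → ℝ := fun n => (∑ k ∈ Finset.range (n + 1), a k) / (n + 1 : ℝ) with hAdef
  have hAnn : ∀ n, 0 ≤ A n := fun n =>
    div_nonneg (Finset.sum_nonneg fun k _ => ha k) (by positivity)
  have hrw : ∀ n : ℕ, (1 / (n + 1 : ℝ)) * ∑ k ∈ Finset.range (n + 1), a k = A n := by
    intro n; rw [hAdef]; ring
  set X : ℝ := ∑ n ∈ Finset.range N, A n ^ p with hX
  set Y : ℝ := ∑ n ∈ Finset.range N, a n ^ p with hY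
  have hXnn : 0 ≤ X := Finset.sum_nonneg fun n _ => Real.rpow_nonneg (hAnn n) _
  have hYnn : 0 ≤ Y := Finset.sum_nonneg fun n _ => Real.rpow_nonneg (ha n) _
  have hgoal : ∑ n ∈ Finset.range N,
      ((1 / (n + 1 : ℝ)) * ∑ k ∈ Finset.range (n + 1), a k) ^ p = X := by
    apply Finset.sum_congr rfl
    intro n _
    rw [hrw n]
  rw [hgoal]
  -- Step 1: (p-1) * X ≤ p * T where T = ∑ a n * A n ^ (p-1)
  set T : ℝ := ∑ n ∈ Finset.range N, a n * A n ^ (p - 1) with hT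
  have step1 : (p - 1) * X ≤ p * T := by
    have key : ∀ n ∈ Finset.range N,
        (p - 1) * A n ^ p ≤ p * (a n * A n ^ (p - 1))
          + ((n : ℝ) * ((∑ k ∈ Finset.range n, a k) / (n : ℝ)) ^ p
              - ((n + 1 : ℝ)) * A n ^ p) := by
      intro n _
      have := hardy_key hp a ha n
      convert this using 3
    have hsumkey := Finset.sum_le_sum key
    rw [← Finset.mul_sum, Finset.sum_add_distrib, ← Finset.mul_sum] at hsumkey
    have htel : ∑ n ∈ Finset.range N,
        ((n : ℝ) * ((∑ k ∈ Finset.range n, a k) / (n : ℝ)) ^ p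
          - ((n + 1 : ℝ)) * A n ^ p) ≤ 0 := by
      have : ∀ n : ℕ, ((n + 1 : ℝ)) * A n ^ p
          = (((n + 1 : ℕ) : ℝ)) * ((∑ k ∈ Finset.range (n + 1), a k) / ((n + 1 : ℕ) : ℝ)) ^ p := by
        intro n
        push_cast
        rfl
      set f : ℕ → ℝ := fun n => (n : ℝ) * ((∑ k ∈ Finset.range n, a k) / (n : ℝ)) ^ p with hf
      have heq : ∑ n ∈ Finset.range N,
          ((n : ℝ) * ((∑ k ∈ Finset.range n, a k) / (n : ℝ)) ^ p
            - ((n + 1 : ℝ)) * A n ^ p) = ∑ n ∈ Finset.range N, (f n - f (n + 1)) := by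
        apply Finset.sum_congr rfl
        intro n _
        rw [this n]
      rw [heq, Finset.sum_range_sub' f]
      have hf0 : f 0 = 0 := by simp [hf, Real.zero_rpow (ne_of_gt hp0)]
      have hfN : 0 ≤ f N := by
        apply mul_nonneg (by positivity)
        exact Real.rpow_nonneg (div_nonneg (Finset.sum_nonneg fun k _ => ha k)
          (Nat.cast_nonneg N)) _
      linarith
    linarith
  -- Step 2: Hölder
  have hpq : p.HolderConjugate (p / (p - 1)) := Real.HolderConjugate.conjExponent hp
  have step2 : T ≤ Y ^ (1 / p) * X ^ (1 - 1 / p) := by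
    have hholder := Real.inner_le_Lp_mul_Lq_of_nonneg (s := Finset.range N) hpq
      (f := a) (g := fun n => A n ^ (p - 1)) (fun i _ => ha i)
      (fun i _ => Real.rpow_nonneg (hAnn i) _)
    have hq : ∀ i : ℕ, (A i ^ (p - 1)) ^ (p / (p - 1)) = A i ^ p := by
      intro i
      rw [← Real.rpow_mul (hAnn i)]
      congr 1
      field_simp
    have hXrw : ∑ i ∈ Finset.range N, (A i ^ (p - 1)) ^ (p / (p - 1)) = X := by
      apply Finset.sum_congr rfl; intro i _; rw [hq i]
    rw [hXrw] at hholder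
    have hqinv : 1 / (p / (p - 1)) = 1 - 1 / p := by
      field_simp
    rw [hqinv] at hholder
    exact hholder
  -- combine
  rcases eq_or_lt_of_le hXnn with hX0 | hX0
  · rw [← hX0]
    exact mul_nonneg (Real.rpow_nonneg (div_nonneg (le_of_lt hp0) (le_of_lt hp1)) _) hYnn
  · -- X > 0
    have hXpow : (0 : ℝ) < X ^ (1 - 1 / p) := Real.rpow_pos_of_pos hX0 _
    have hcomb : X ≤ p / (p - 1) * (Y ^ (1 / p) * X ^ (1 - 1 / p)) := by
      calc X ≤ p / (p - 1) * T := by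
              rw [div_mul_eq_mul_div, le_div_iff₀ hp1, mul_comm X]
              linarith [step1]
        _ ≤ _ := by
              apply mul_le_mul_of_nonneg_left step2
              positivity
    have hXp : X ^ (1 / p) ≤ p / (p - 1) * Y ^ (1 / p) := by
      have hdiv : X / X ^ (1 - 1 / p) ≤ p / (p - 1) * Y ^ (1 / p) := by
        rw [div_le_iff₀ hXpow]
        calc X ≤ p / (p - 1) * (Y ^ (1 / p) * X ^ (1 - 1 / p)) := hcomb
          _ = p / (p - 1) * Y ^ (1 / p) * X ^ (1 - 1 / p) := by ring
      have hXrw : X ^ (1 / p) = X / X ^ (1 - 1 / p) := by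
        have h := Real.rpow_sub hX0 1 (1 - 1 / p)
        rw [Real.rpow_one] at h
        rw [← h]
        congr 1
        ring
      rw [hXrw]
      exact hdiv
    have hX1 : (X ^ (1 / p)) ^ p = X := by
      rw [← Real.rpow_mul (le_of_lt hX0), one_div, inv_mul_cancel₀ (ne_of_gt hp0),
        Real.rpow_one]
    have hY1 : (Y ^ (1 / p)) ^ p = Y := by
      rw [← Real.rpow_mul hYnn, one_div, inv_mul_cancel₀ (ne_of_gt hp0), Real.rpow_one]
    calc X = (X ^ (1 / p)) ^ p := hX1.symm
      _ ≤ (p / (p - 1) * Y ^ (1 / p)) ^ p :=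
          Real.rpow_le_rpow (Real.rpow_nonneg (le_of_lt hX0) _) hXp (le_of_lt hp0)
      _ = (p / (p - 1)) ^ p * (Y ^ (1 / p)) ^ p :=
          Real.mul_rpow (by positivity) (Real.rpow_nonneg hYnn _)
      _ = (p / (p - 1)) ^ p * Y := by rw [hY1]
end aux

/-- Classical discrete Hardy inequality. Sequences are indexed by `n : ℕ`
representing the term `a_{n+1}`; the sum `∑_{k=1}^{n} a_k` is `∑ k in range n, a k`
shifted accordingly. The inequality is interpreted in `[0,∞]`. -/
theorem discrete_hardy_inequality (p : ℝ) (hp : 1 < p) (a : ℕ → ℝ) (ha : ∀ n, 0 ≤ a n) :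
    ∑' n : ℕ, ENNReal.ofReal
        ((1 / (n + 1 : ℝ)) * ∑ k ∈ Finset.range (n + 1), a k) ^ p
      ≤ ENNReal.ofReal ((p / (p - 1)) ^ p) * ∑' n : ℕ, ENNReal.ofReal (a n) ^ p := by
  have hp0 : (0 : ℝ) < p := lt_trans one_pos hp
  -- rewrite terms as ofReal of rpow
  have hterm : ∀ n : ℕ, ENNReal.ofReal
      ((1 / (n + 1 : ℝ)) * ∑ k ∈ Finset.range (n + 1), a k) ^ p
      = ENNReal.ofReal (((1 / (n + 1 : ℝ)) * ∑ k ∈ Finset.range (n + 1), a k) ^ p) := by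
    intro n
    exact ENNReal.ofReal_rpow_of_nonneg
      (mul_nonneg (by positivity) (Finset.sum_nonneg fun k _ => ha k)) (le_of_lt hp0)
  have hterm' : ∀ n : ℕ, ENNReal.ofReal (a n) ^ p = ENNReal.ofReal (a n ^ p) := fun n =>
    ENNReal.ofReal_rpow_of_nonneg (ha n) (le_of_lt hp0)
  simp_rw [hterm, hterm']
  rw [ENNReal.tsum_eq_iSup_sum]
  apply iSup_le
  intro s
  obtain ⟨N, hN⟩ := s.exists_nat_subset_range
  calc ∑ n ∈ s, ENNReal.ofReal
        (((1 / (n + 1 : ℝ)) * ∑ k ∈ Finset.range (n + 1), a k) ^ p)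
      ≤ ∑ n ∈ Finset.range N, ENNReal.ofReal
        (((1 / (n + 1 : ℝ)) * ∑ k ∈ Finset.range (n + 1), a k) ^ p) :=
        Finset.sum_le_sum_of_subset hN
    _ = ENNReal.ofReal (∑ n ∈ Finset.range N,
        ((1 / (n + 1 : ℝ)) * ∑ k ∈ Finset.range (n + 1), a k) ^ p) := by
        rw [ENNReal.ofReal_sum_of_nonneg]
        intro n _
        exact Real.rpow_nonneg
          (mul_nonneg (by positivity) (Finset.sum_nonneg fun k _ => ha k)) _
    _ ≤ ENNReal.ofReal ((p / (p - 1)) ^ p * ∑ n ∈ Finset.range N, a n ^ p) :=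
        ENNReal.ofReal_le_ofReal (hardy_finite hp a ha N)
    _ = ENNReal.ofReal ((p / (p - 1)) ^ p) * ENNReal.ofReal (∑ n ∈ Finset.range N, a n ^ p) := by
        rw [ENNReal.ofReal_mul
          (Real.rpow_nonneg (div_nonneg (by positivity) (by linarith)) _)]
    _ = ENNReal.ofReal ((p / (p - 1)) ^ p) * ∑ n ∈ Finset.range N, ENNReal.ofReal (a n ^ p) := by
        rw [ENNReal.ofReal_sum_of_nonneg]
        intro n _
        exact Real.rpow_nonneg (ha n) _
    _ ≤ ENNReal.ofReal ((p / (p - 1)) ^ p) * ∑' n, ENNReal.ofReal (a n ^ p) := by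
        apply mul_le_mul_right
        exact ENNReal.sum_le_tsum _
end

section
/- Let p,q > 1 with 1/p + 1/q = 1, and let (Ω_i) be positive reals and (ω_i) positive reals. Then the inequality sum_{j≥1} Ω_j ω_j^p (sum_{i=1}^j d_i)^p ≤ C^p sum_{j≥1} Ω_j ω_j^p d_j^p holds for all non-negative sequences (d_j) if and only if the dual inequality sum_{i≥1} Ω_i^{1-q} ω_i^{-q} (sum_{j≥i}^∞ b_j)^q ≤ C^q sum_{i≥1} Ω_i^{1-q} ω_i^{-q} b_i^q holds for all non-negative sequences (b_i), with the same constant C. -/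
open Finset ENNReal

private lemma holder_tsum {r s : ℝ} (h : Real.HolderConjugate r s) (f g : ℕ → ℝ≥0∞) :
    ∑' i, f i * g i ≤ (∑' i, f i ^ r) ^ (1/r) * (∑' i, g i ^ s) ^ (1/s) := by
  have := ENNReal.lintegral_mul_le_Lp_mul_Lq (MeasureTheory.Measure.count : MeasureTheory.Measure ℕ)
    h (f := f) (g := g) measurable_from_nat.aemeasurable measurable_from_nat.aemeasurable
  simpa [MeasureTheory.lintegral_count] using this

private lemma tsum_ite_partial (h : ℕ → ℝ≥0∞) (n : ℕ) :
    ∑' i, (if i ≤ n then (1:ℝ≥0∞) else 0) * h i = ∑ i ∈ Finset.range (n+1), h i := by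
  refine (tsum_eq_sum (s := Finset.range (n+1)) ?_).trans (Finset.sum_congr rfl ?_)
  · intro b hb; rw [Finset.mem_range, Nat.lt_succ_iff] at hb; simp [hb]
  · intro b hb; rw [Finset.mem_range, Nat.lt_succ_iff] at hb; simp [hb]

private lemma tsum_ite_tail (h : ℕ → ℝ≥0∞) (n : ℕ) :
    ∑' j, (if n ≤ j then (1:ℝ≥0∞) else 0) * h j = ∑' m, h (n + m) := by
  have hinj : Function.Injective (fun m : ℕ => n + m) := fun a b hab => by simpa using hab
  have h0 : Function.support (fun x => (if n ≤ x then (1:ℝ≥0∞) else 0) * h x)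
      ⊆ Set.range (fun m : ℕ => n + m) := by
    intro x hx
    by_cases hnx : n ≤ x
    · exact ⟨x - n, by simp; omega⟩
    · simp [hnx] at hx
  rw [← Function.Injective.tsum_eq hinj h0]
  simp

private lemma iSup_rpow' (u : ℕ → ℝ≥0∞) {r : ℝ} (hr : 0 < r) : (⨆ n, u n) ^ r = ⨆ n, u n ^ r := by
  refine le_antisymm ?_ (iSup_le fun n => ENNReal.rpow_le_rpow (le_iSup u n) hr.le)
  have h : ∀ n, u n ≤ (⨆ n, u n ^ r) ^ (1/r) := fun n => by
    calc u n = (u n ^ r) ^ (1/r) := by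
          rw [← ENNReal.rpow_mul, mul_one_div_cancel hr.ne', ENNReal.rpow_one]
      _ ≤ _ := ENNReal.rpow_le_rpow (le_iSup (fun n => u n ^ r) n) (by positivity)
  calc (⨆ n, u n) ^ r ≤ ((⨆ n, u n ^ r) ^ (1/r)) ^ r := ENNReal.rpow_le_rpow (iSup_le h) hr.le
    _ = ⨆ n, u n ^ r := by rw [← ENNReal.rpow_mul, one_div_mul_cancel hr.ne', ENNReal.rpow_one]

private lemma self_mul_rpow {x : ℝ≥0∞} (hx : x ≠ ⊤) {r : ℝ} (hr : 1 < r) :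
    x * x ^ (r-1) = x ^ r := by
  rcases eq_or_ne x 0 with h0 | h0
  · subst h0
    rw [ENNReal.zero_rpow_of_pos (by linarith), ENNReal.zero_rpow_of_pos (by linarith), mul_zero]
  · calc x * x ^ (r-1) = x ^ (1:ℝ) * x ^ (r-1) := by rw [ENNReal.rpow_one]
      _ = x ^ (1 + (r-1)) := (ENNReal.rpow_add _ _ h0 hx).symm
      _ = x ^ r := by norm_num

/-- Abstract duality for subunit kernels: if the adjoint operator is bounded on the dual
weighted space with exponent `s`, then the operator is bounded on the weighted space with
exponent `r`, with the same constant. -/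
private lemma key_duality {r s : ℝ} (hr : 1 < r) (hs : 1 < s) (hmul : r * s = r + s)
    (w : ℕ → ℝ≥0∞) (hw0 : ∀ i, w i ≠ 0) (hwt : ∀ i, w i ≠ ⊤)
    (K : ℕ → ℕ → ℝ≥0∞) (hK : ∀ j i, K j i ≤ 1)
    (C : ℝ≥0∞) (hC0 : C ≠ 0) (hCt : C ≠ ⊤)
    (H : ∀ g : ℕ → ℝ≥0∞, (∀ j, g j ≠ ⊤) →
      ∑' i, w i ^ (1 - s) * (∑' j, K j i * g j) ^ s ≤ C ^ s * ∑' i, w i ^ (1 - s) * g i ^ s)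
    (f : ℕ → ℝ≥0∞) (hf : ∀ i, f i ≠ ⊤) :
    ∑' j, w j * (∑' i, K j i * f i) ^ r ≤ C ^ r * ∑' j, w j * f j ^ r := by
  have hr0 : (0:ℝ) < r := by linarith
  have hs0 : (0:ℝ) < s := by linarith
  have hconj : Real.HolderConjugate r s := Real.holderConjugate_iff.mpr ⟨hr, by
    rw [inv_eq_one_div, inv_eq_one_div, div_add_div _ _ hr0.ne' hs0.ne',
      div_eq_one_iff_eq (by positivity)]
    linarith⟩
  have hrs1 : (r - 1) * s = r := by nlinarith
  have hsr1 : -(1/r) * s = 1 - s := by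
    field_simp
    nlinarith
  have hKfin : ∀ j i, K j i ≠ ⊤ := fun j i => ((hK j i).trans_lt one_lt_top).ne
  set R := ∑' j, w j * f j ^ r with hR
  set A : ℕ → ℕ → ℝ≥0∞ := fun N j => ∑ i ∈ Finset.range N, K j i * f i with hA
  have hAfin : ∀ N j, A N j ≠ ⊤ := fun N j =>
    ENNReal.sum_ne_top.mpr fun i _ => ENNReal.mul_ne_top (hKfin j i) (hf i)
  have hAmono : ∀ j, Monotone fun N => A N j := fun j a b hab =>
    Finset.sum_le_sum_of_subset (Finset.range_subset_range.mpr hab)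
  have hCr0 : C ^ r ≠ 0 := by simp [ENNReal.rpow_eq_zero_iff, hC0, hCt]
  have main : ∀ N, ∑ j ∈ Finset.range N, w j * A N j ^ r ≤ C ^ r * R := by
    intro N
    rcases eq_or_ne R ⊤ with hRt | hRt
    · rw [hRt, ENNReal.mul_top hCr0]; exact le_top
    set L := ∑ j ∈ Finset.range N, w j * A N j ^ r with hL
    rcases eq_or_ne L 0 with hL0 | hL0
    · exact hL0 ▸ zero_le
    have hLt : L ≠ ⊤ := ENNReal.sum_ne_top.mpr fun j _ =>
      ENNReal.mul_ne_top (hwt j) (ENNReal.rpow_ne_top_of_nonneg hr0.le (hAfin N j))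
    set g : ℕ → ℝ≥0∞ := fun j => if j < N then w j * A N j ^ (r-1) else 0 with hg
    have hgfin : ∀ j, g j ≠ ⊤ := by
      intro j; simp only [hg]; split
      · exact ENNReal.mul_ne_top (hwt j)
          (ENNReal.rpow_ne_top_of_nonneg (by linarith) (hAfin N j))
      · simp
    have hpair : ∑' j, A N j * g j = L := by
      rw [tsum_eq_sum (s := Finset.range N)
        (fun b hb => by rw [Finset.mem_range] at hb; simp [hg, hb])]
      refine Finset.sum_congr rfl fun j hj => ?_
      rw [Finset.mem_range] at hj
      simp only [hg, if_pos hj]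
      rw [mul_left_comm, self_mul_rpow (hAfin N j) hr]
    set fN : ℕ → ℝ≥0∞ := fun i => if i < N then f i else 0 with hfN
    have hfNle : ∀ i, fN i ≤ f i := fun i => by
      simp only [hfN]; split
      · exact le_rfl
      · exact zero_le
    have hANt : ∀ j, A N j = ∑' i, K j i * fN i := by
      intro j
      rw [tsum_eq_sum (s := Finset.range N)
        (fun b hb => by rw [Finset.mem_range] at hb; simp [hfN, hb])]
      exact Finset.sum_congr rfl fun i hi => by
        rw [Finset.mem_range] at hi; simp [hfN, hi]
    set Bg : ℕ → ℝ≥0∞ := fun i => ∑' j, K j i * g j with hBg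
    have hfub : ∑' j, A N j * g j = ∑' i, fN i * Bg i := by
      calc ∑' j, A N j * g j = ∑' j, ∑' i, (K j i * fN i) * g j := by
            refine tsum_congr fun j => ?_
            rw [hANt j, ENNReal.tsum_mul_right]
        _ = ∑' i, ∑' j, (K j i * fN i) * g j := ENNReal.tsum_comm
        _ = ∑' i, fN i * Bg i := by
            refine tsum_congr fun i => ?_
            rw [hBg, ← ENNReal.tsum_mul_left]
            exact tsum_congr fun j => by ring
    have hsplit : ∀ i, fN i * Bg i = (w i ^ (1/r) * fN i) * (w i ^ (-(1/r)) * Bg i) := by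
      intro i
      have h1 : w i ^ (1/r) * w i ^ (-(1/r)) = 1 := by
        rw [← ENNReal.rpow_add _ _ (hw0 i) (hwt i), add_neg_cancel, ENNReal.rpow_zero]
      calc fN i * Bg i = (w i ^ (1/r) * w i ^ (-(1/r))) * (fN i * Bg i) := by
            rw [h1, one_mul]
        _ = _ := by ring
    have holder : ∑' i, fN i * Bg i ≤
        (∑' i, (w i ^ (1/r) * fN i) ^ r) ^ (1/r) *
          (∑' i, (w i ^ (-(1/r)) * Bg i) ^ s) ^ (1/s) := by
      rw [tsum_congr hsplit]
      exact holder_tsum hconj _ _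
    have hfactor1 : ∑' i, (w i ^ (1/r) * fN i) ^ r ≤ R := by
      calc ∑' i, (w i ^ (1/r) * fN i) ^ r = ∑' i, w i * fN i ^ r :=
            tsum_congr fun i => by
              rw [ENNReal.mul_rpow_of_nonneg _ _ hr0.le, ← ENNReal.rpow_mul,
                one_div_mul_cancel hr0.ne', ENNReal.rpow_one]
        _ ≤ ∑' i, w i * f i ^ r :=
            ENNReal.tsum_le_tsum fun i =>
              mul_le_mul_right (ENNReal.rpow_le_rpow (hfNle i) hr0.le) _
        _ = R := hR.symm
    have hfactor2 : ∑' i, (w i ^ (-(1/r)) * Bg i) ^ s = ∑' i, w i ^ (1-s) * Bg i ^ s := by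
      refine tsum_congr fun i => ?_
      rw [ENNReal.mul_rpow_of_nonneg _ _ hs0.le, ← ENNReal.rpow_mul, hsr1]
    have hgL : ∑' i, w i ^ (1-s) * g i ^ s = L := by
      rw [tsum_eq_sum (s := Finset.range N) (fun b hb => by
        rw [Finset.mem_range] at hb
        simp [hg, hb, ENNReal.zero_rpow_of_pos hs0])]
      refine Finset.sum_congr rfl fun j hj => ?_
      rw [Finset.mem_range] at hj
      simp only [hg, if_pos hj]
      rw [ENNReal.mul_rpow_of_nonneg _ _ hs0.le, ← ENNReal.rpow_mul, hrs1,
        ← mul_assoc, ← ENNReal.rpow_add _ _ (hw0 j) (hwt j),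
        show (1:ℝ) - s + s = 1 by ring, ENNReal.rpow_one]
    have hcomb : L ≤ R ^ (1/r) * (C * L ^ (1/s)) := by
      calc L = ∑' i, fN i * Bg i := by rw [← hpair, hfub]
        _ ≤ (∑' i, (w i ^ (1/r) * fN i) ^ r) ^ (1/r) *
              (∑' i, (w i ^ (-(1/r)) * Bg i) ^ s) ^ (1/s) := holder
        _ ≤ R ^ (1/r) * (C ^ s * L) ^ (1/s) := by
            refine mul_le_mul' (ENNReal.rpow_le_rpow hfactor1 (by positivity))
              (ENNReal.rpow_le_rpow ?_ (by positivity))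
            rw [hfactor2]
            calc ∑' i, w i ^ (1-s) * Bg i ^ s
                ≤ C ^ s * ∑' i, w i ^ (1-s) * g i ^ s := H g hgfin
              _ = C ^ s * L := by rw [hgL]
        _ = R ^ (1/r) * (C * L ^ (1/s)) := by
            rw [ENNReal.mul_rpow_of_nonneg _ _ (by positivity : (0:ℝ) ≤ 1/s),
              ← ENNReal.rpow_mul, mul_one_div_cancel hs0.ne', ENNReal.rpow_one]
    have hLs0 : L ^ (1/s) ≠ 0 := by simp [ENNReal.rpow_eq_zero_iff, hL0, hLt]
    have hLst : L ^ (1/s) ≠ ⊤ := ENNReal.rpow_ne_top_of_nonneg (by positivity) hLt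
    have hsplitL : L = L ^ (1/r) * L ^ (1/s) := by
      rw [← ENNReal.rpow_add _ _ hL0 hLt]
      rw [show 1/r + 1/s = 1 by rw [one_div, one_div]; exact hconj.inv_add_inv_eq_one]
      rw [ENNReal.rpow_one]
    have step : L ^ (1/r) * L ^ (1/s) ≤ (R ^ (1/r) * C) * L ^ (1/s) := by
      rw [← hsplitL]
      calc L ≤ R ^ (1/r) * (C * L ^ (1/s)) := hcomb
        _ = (R ^ (1/r) * C) * L ^ (1/s) := by ring
    have step2 : L ^ (1/r) ≤ R ^ (1/r) * C := (ENNReal.mul_le_mul_iff_left hLs0 hLst).mp step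
    calc L = (L ^ (1/r)) ^ r := by
          rw [← ENNReal.rpow_mul, one_div_mul_cancel hr0.ne', ENNReal.rpow_one]
      _ ≤ (R ^ (1/r) * C) ^ r := ENNReal.rpow_le_rpow step2 hr0.le
      _ = C ^ r * R := by
          rw [ENNReal.mul_rpow_of_nonneg _ _ hr0.le, ← ENNReal.rpow_mul,
            one_div_mul_cancel hr0.ne', ENNReal.rpow_one, mul_comm]
  rw [ENNReal.tsum_eq_iSup_nat]
  refine iSup_le fun n => ?_
  have hAf : ∀ j, (∑' i, K j i * f i) = ⨆ N, A N j := fun j => ENNReal.tsum_eq_iSup_nat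
  calc ∑ j ∈ Finset.range n, w j * (∑' i, K j i * f i) ^ r
      = ∑ j ∈ Finset.range n, ⨆ N, w j * A N j ^ r := by
        refine Finset.sum_congr rfl fun j _ => ?_
        rw [hAf j, iSup_rpow' _ hr0, ENNReal.mul_iSup]
    _ = ⨆ N, ∑ j ∈ Finset.range n, w j * A N j ^ r :=
        ENNReal.finsetSum_iSup_of_monotone fun j a b hab =>
          mul_le_mul_right (ENNReal.rpow_le_rpow (hAmono j hab) hr0.le) _
    _ ≤ C ^ r * R := by
        refine iSup_le fun N => ?_
        refine le_trans ?_ (main (max n N))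
        refine le_trans (Finset.sum_le_sum fun j _ => mul_le_mul_right
          (ENNReal.rpow_le_rpow (hAmono j (le_max_right n N)) hr0.le) _) ?_
        exact Finset.sum_le_sum_of_subset (Finset.range_subset_range.mpr (le_max_left n N))

/-- Duality between the weighted discrete Hardy inequality and its dual version.
Sequences are indexed by `n : ℕ` representing index `n+1 ≥ 1`; `∑ i in range (j+1)`
is the partial sum `∑_{i=1}^{j}` and `∑' j, b (i + j)` is the tail sum `∑_{j≥i}`.
All inequalities are interpreted in `[0,∞]`. -/
theorem hardy_duality (p q : ℝ) (hp : 1 < p) (hq : 1 < q) (hpq : 1 / p + 1 / q = 1)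
    (Om om : ℕ → ℝ) (hOm : ∀ i, 0 < Om i) (hom : ∀ i, 0 < om i) (C : ℝ) (hC : 0 < C) :
    (∀ d : ℕ → ℝ, (∀ n, 0 ≤ d n) →
      ∑' j : ℕ, ENNReal.ofReal (Om j * om j ^ p) *
          ENNReal.ofReal (∑ i ∈ Finset.range (j + 1), d i) ^ p
        ≤ ENNReal.ofReal (C ^ p) *
          ∑' j : ℕ, ENNReal.ofReal (Om j * om j ^ p) * ENNReal.ofReal (d j) ^ p)
    ↔
    (∀ b : ℕ → ℝ, (∀ n, 0 ≤ b n) →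
      ∑' i : ℕ, ENNReal.ofReal (Om i ^ (1 - q) * om i ^ (-q)) *
          (∑' j : ℕ, ENNReal.ofReal (b (i + j))) ^ q
        ≤ ENNReal.ofReal (C ^ q) *
          ∑' i : ℕ, ENNReal.ofReal (Om i ^ (1 - q) * om i ^ (-q)) * ENNReal.ofReal (b i) ^ q) := by
  have hp0 : (0:ℝ) < p := by linarith
  have hq0 : (0:ℝ) < q := by linarith
  have hpq' : p * q = p + q := by
    field_simp at hpq
    linarith
  set U : ℕ → ℝ≥0∞ := fun i => ENNReal.ofReal (Om i * om i ^ p) with hU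
  set V : ℕ → ℝ≥0∞ := fun i => ENNReal.ofReal (Om i ^ (1-q) * om i ^ (-q)) with hV
  have hUpos : ∀ i, 0 < Om i * om i ^ p := fun i =>
    mul_pos (hOm i) (Real.rpow_pos_of_pos (hom i) p)
  have hVpos : ∀ i, 0 < Om i ^ (1-q) * om i ^ (-q) := fun i =>
    mul_pos (Real.rpow_pos_of_pos (hOm i) _) (Real.rpow_pos_of_pos (hom i) _)
  have hU0 : ∀ i, U i ≠ 0 := fun i => by
    simp only [hU]; simp [ENNReal.ofReal_eq_zero, not_le, hUpos i]
  have hUt : ∀ i, U i ≠ ⊤ := fun i => ENNReal.ofReal_ne_top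
  have hV0 : ∀ i, V i ≠ 0 := fun i => by
    simp only [hV]; simp [ENNReal.ofReal_eq_zero, not_le, hVpos i]
  have hVt : ∀ i, V i ≠ ⊤ := fun i => ENNReal.ofReal_ne_top
  have hUV : ∀ i, U i ^ (1 - q) = V i := by
    intro i
    simp only [hU, hV]
    rw [ENNReal.ofReal_rpow_of_pos (hUpos i)]
    congr 1
    rw [Real.mul_rpow (hOm i).le (Real.rpow_pos_of_pos (hom i) p).le,
      ← Real.rpow_mul (hom i).le, show p * (1-q) = -q by nlinarith]
  have hVU : ∀ i, V i ^ (1 - p) = U i := by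
    intro i
    simp only [hU, hV]
    rw [ENNReal.ofReal_rpow_of_pos (hVpos i)]
    congr 1
    rw [Real.mul_rpow (Real.rpow_pos_of_pos (hOm i) _).le (Real.rpow_pos_of_pos (hom i) _).le,
      ← Real.rpow_mul (hOm i).le, ← Real.rpow_mul (hom i).le,
      show (1-q) * (1-p) = 1 by nlinarith, show (-q) * (1-p) = p by nlinarith, Real.rpow_one]
  have hCq : ENNReal.ofReal (C ^ q) = ENNReal.ofReal C ^ q := (ENNReal.ofReal_rpow_of_pos hC).symm
  have hCp : ENNReal.ofReal (C ^ p) = ENNReal.ofReal C ^ p := (ENNReal.ofReal_rpow_of_pos hC).symm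
  have hC0' : ENNReal.ofReal C ≠ 0 := by simp [ENNReal.ofReal_eq_zero, not_le, hC]
  have hCt' : ENNReal.ofReal C ≠ ⊤ := ENNReal.ofReal_ne_top
  constructor
  · -- Hardy ⇒ dual Hardy
    intro hA b hb
    have key := key_duality (r := q) (s := p) hq hp (by nlinarith)
      V hV0 hVt (fun a c => if a ≤ c then (1:ℝ≥0∞) else 0)
      (fun a c => by split <;> simp)
      (ENNReal.ofReal C) hC0' hCt'
      (fun g hg => by
        have h1 : ∀ i, (∑' j, (if j ≤ i then (1:ℝ≥0∞) else 0) * g j) =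
            ENNReal.ofReal (∑ j ∈ Finset.range (i+1), (g j).toReal) := by
          intro i
          rw [tsum_ite_partial, ENNReal.ofReal_sum_of_nonneg (fun j _ => ENNReal.toReal_nonneg)]
          exact Finset.sum_congr rfl fun j _ => (ENNReal.ofReal_toReal (hg j)).symm
        calc ∑' i, V i ^ (1-p) * (∑' j, (if j ≤ i then (1:ℝ≥0∞) else 0) * g j) ^ p
            = ∑' j, U j * ENNReal.ofReal (∑ i ∈ Finset.range (j+1), (g i).toReal) ^ p :=
              tsum_congr fun i => by rw [hVU i, h1 i]
          _ ≤ ENNReal.ofReal (C ^ p) *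
              ∑' j, U j * ENNReal.ofReal ((g j).toReal) ^ p :=
              hA _ (fun n => ENNReal.toReal_nonneg)
          _ = ENNReal.ofReal C ^ p * ∑' i, V i ^ (1-p) * g i ^ p := by
              rw [hCp]
              congr 1
              exact tsum_congr fun i => by rw [hVU i, ENNReal.ofReal_toReal (hg i)])
      (fun n => ENNReal.ofReal (b n)) (fun n => ENNReal.ofReal_ne_top)
    rw [hCq]
    calc ∑' i, V i * (∑' j, ENNReal.ofReal (b (i + j))) ^ q
        = ∑' i, V i * (∑' j, (if i ≤ j then (1:ℝ≥0∞) else 0) * ENNReal.ofReal (b j)) ^ q :=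
          tsum_congr fun i => by rw [tsum_ite_tail]
      _ ≤ ENNReal.ofReal C ^ q * ∑' i, V i * ENNReal.ofReal (b i) ^ q := key
  · -- dual Hardy ⇒ Hardy
    intro hB d hd
    have key := key_duality (r := p) (s := q) hp hq (by nlinarith)
      U hU0 hUt (fun a c => if c ≤ a then (1:ℝ≥0∞) else 0)
      (fun a c => by split <;> simp)
      (ENNReal.ofReal C) hC0' hCt'
      (fun g hg => by
        have h1 : ∀ i, (∑' j, (if i ≤ j then (1:ℝ≥0∞) else 0) * g j) =
            ∑' m, ENNReal.ofReal ((g (i + m)).toReal) := by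
          intro i
          rw [tsum_ite_tail]
          exact tsum_congr fun m => (ENNReal.ofReal_toReal (hg (i + m))).symm
        calc ∑' i, U i ^ (1-q) * (∑' j, (if i ≤ j then (1:ℝ≥0∞) else 0) * g j) ^ q
            = ∑' i, V i * (∑' m, ENNReal.ofReal ((g (i + m)).toReal)) ^ q :=
              tsum_congr fun i => by rw [hUV i, h1 i]
          _ ≤ ENNReal.ofReal (C ^ q) * ∑' i, V i * ENNReal.ofReal ((g i).toReal) ^ q :=
              hB _ (fun n => ENNReal.toReal_nonneg)
          _ = ENNReal.ofReal C ^ q * ∑' i, U i ^ (1-q) * g i ^ q := by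
              rw [hCq]
              congr 1
              exact tsum_congr fun i => by rw [hUV i, ENNReal.ofReal_toReal (hg i)])
      (fun n => ENNReal.ofReal (d n)) (fun n => ENNReal.ofReal_ne_top)
    rw [hCp]
    calc ∑' j, U j * ENNReal.ofReal (∑ i ∈ Finset.range (j + 1), d i) ^ p
        = ∑' j, U j * (∑' i, (if i ≤ j then (1:ℝ≥0∞) else 0) * ENNReal.ofReal (d i)) ^ p := by
          refine tsum_congr fun j => ?_
          rw [tsum_ite_partial, ENNReal.ofReal_sum_of_nonneg (fun i _ => hd i)]
      _ ≤ ENNReal.ofReal C ^ p * ∑' j, U j * ENNReal.ofReal (d j) ^ p := key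
end

section
/- Let p, q > 1 with 1/p + 1/q = 1, let γ ≥ 1 and β > (-γ-1)/p, and set r = 2^{-pβ - γ - 1} ∈ (0,1) and u_i = C_γ r^i with C_γ = (1 - 2^{-2(γ+1)})/(γ+1). Then there exists a constant C (one may take C = 4 (1/(r(1-r)))^{1/p} (1/(r^{1-q}-1))^{1/q}) such that for every non-negative sequence (d_j), sum_{j≥1} u_j (sum_{i=1}^j d_i)^p ≤ C^p sum_{j≥1} u_j d_j^p. -/
open Finset

open scoped ENNReal NNReal

lemma geom_tail_le (σ : ℝ≥0∞) (hσ0 : σ ≠ 0) (hσt : σ ≠ ⊤) (j : ℕ) :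
    ∑ i ∈ Finset.range (j + 1), σ ^ (-(i : ℝ)) ≤ σ ^ (-(j : ℝ)) * (1 - σ)⁻¹ := by
  have h1 : ∀ i ∈ Finset.range (j + 1),
      σ ^ (-(i : ℝ)) = σ ^ (-(j : ℝ)) * σ ^ (((j - i : ℕ) : ℕ) : ℝ) := by
    intro i hi
    rw [Finset.mem_range, Nat.lt_succ_iff] at hi
    rw [← ENNReal.rpow_add _ _ hσ0 hσt]
    congr 1
    rw [Nat.cast_sub hi]
    ring
  rw [Finset.sum_congr rfl h1, ← Finset.mul_sum]
  gcongr
  have h2 : ∀ i ∈ Finset.range (j + 1), σ ^ (((j - i : ℕ) : ℕ) : ℝ) = σ ^ (j - i : ℕ) := by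
    intro i _; rw [ENNReal.rpow_natCast]
  rw [Finset.sum_congr rfl h2]
  calc ∑ i ∈ Finset.range (j + 1), σ ^ (j - i : ℕ)
      = ∑ i ∈ Finset.range (j + 1), σ ^ i := by
        rw [← Finset.sum_range_reflect (fun i => σ ^ i) (j + 1)]
        simp
    _ ≤ ∑' k : ℕ, σ ^ k := ENNReal.sum_le_tsum _
    _ = (1 - σ)⁻¹ := ENNReal.tsum_geometric σ

lemma tail_shift (f : ℕ → ℝ≥0∞) (i : ℕ) (h0 : ∀ j < i, f j = 0) :
    ∑' j : ℕ, f j = ∑' k : ℕ, f (k + i) := by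
  refine (Function.Injective.tsum_eq (g := fun k => k + i) (fun a b h => by simpa using h) ?_).symm
  intro j hj
  rcases Nat.lt_or_ge j i with h | h
  · exact absurd (h0 j h) hj
  · exact ⟨j - i, by simp; omega⟩

lemma swap_sum (G : ℕ → ℕ → ℝ≥0∞) :
    ∑' j : ℕ, ∑ i ∈ Finset.range (j + 1), G i j = ∑' i : ℕ, ∑' k : ℕ, G i (k + i) := by
  have h1 : ∀ j : ℕ, ∑ i ∈ Finset.range (j + 1), G i j
      = ∑' i : ℕ, if i ≤ j then G i j else 0 := by
    intro j
    rw [tsum_eq_sum (s := Finset.range (j + 1)) (by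
      intro b hb
      rw [Finset.mem_range, Nat.lt_succ_iff] at hb
      simp [hb])]
    refine Finset.sum_congr rfl fun i hi => ?_
    rw [Finset.mem_range, Nat.lt_succ_iff] at hi
    simp [hi]
  simp_rw [h1]
  rw [ENNReal.tsum_comm]
  refine tsum_congr fun i => ?_
  rw [tail_shift (fun j => if i ≤ j then G i j else 0) i
    (fun j hj => by simp [Nat.not_le.mpr hj])]
  exact tsum_congr fun k => by simp [Nat.le_add_left]

lemma hardy_geom (p q : ℝ) (hp : 1 < p) (hq : 1 < q) (hpq : 1 / p + 1 / q = 1)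
    (ρ : ℝ≥0∞) (hρ0 : ρ ≠ 0) (hρ1 : ρ < 1) (a : ℕ → ℝ≥0∞) :
    ∑' j : ℕ, ρ ^ j * (∑ i ∈ Finset.range (j + 1), a i) ^ p
      ≤ ((1 - ρ ^ (1 / p))⁻¹) ^ p * ∑' j : ℕ, ρ ^ j * a j ^ p := by
  have hρt : ρ ≠ ⊤ := (hρ1.trans ENNReal.one_lt_top).ne
  have hp0 : (0:ℝ) < p := lt_trans one_pos hp
  have hq0 : (0:ℝ) < q := lt_trans one_pos hq
  have conj : p.HolderConjugate q := Real.holderConjugate_iff.mpr ⟨hp, by simpa [one_div] using hpq⟩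
  have hpq2 : p / q + 1 = p := by field_simp at hpq; field_simp; linarith
  set σ : ℝ≥0∞ := ρ ^ (1 / p) with hσdef
  have hσ0 : σ ≠ 0 := by
    simp [hσdef, ENNReal.rpow_eq_zero_iff, hρ0, hρt, one_div_pos.mpr hp0]
  have hσt : σ ≠ ⊤ := by
    simp [hσdef, ENNReal.rpow_eq_top_iff, hρ0, hρt, one_div_pos.mpr hp0]
  have hσ1 : σ < 1 := ENNReal.rpow_lt_one hρ1 (by positivity)
  have hρσ : ∀ x : ℝ, σ ^ (x * p) = ρ ^ x := by
    intro x
    rw [hσdef, ← ENNReal.rpow_mul]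
    congr 1
    field_simp
  have hone0 : (1 - σ) ≠ 0 := (tsub_pos_of_lt hσ1).ne'
  have honet : (1 - σ) ≠ ⊤ := ((tsub_le_self.trans_lt ENNReal.one_lt_top)).ne
  have hinv0 : (1 - σ)⁻¹ ≠ 0 := ENNReal.inv_ne_zero.mpr honet
  have hinvt : (1 - σ)⁻¹ ≠ ⊤ := ENNReal.inv_ne_top.mpr hone0
  -- Hölder step
  have holder : ∀ j : ℕ,
      (∑ i ∈ Finset.range (j + 1), a i)
        ≤ (∑ i ∈ Finset.range (j + 1), a i ^ p * σ ^ ((i : ℝ) * (p / q))) ^ (1 / p)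
          * (σ ^ (-(j : ℝ)) * (1 - σ)⁻¹) ^ (1 / q) := by
    intro j
    have h1 : ∀ i ∈ Finset.range (j + 1),
        a i = (a i * σ ^ ((i : ℝ) * (1 / q))) * σ ^ (-((i : ℝ) * (1 / q))) := by
      intro i _
      rw [mul_assoc, ← ENNReal.rpow_add _ _ hσ0 hσt]
      simp
    calc (∑ i ∈ Finset.range (j + 1), a i)
        = ∑ i ∈ Finset.range (j + 1),
            (a i * σ ^ ((i : ℝ) * (1 / q))) * σ ^ (-((i : ℝ) * (1 / q))) :=
          Finset.sum_congr rfl h1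
      _ ≤ (∑ i ∈ Finset.range (j + 1), (a i * σ ^ ((i : ℝ) * (1 / q))) ^ p) ^ (1 / p)
          * (∑ i ∈ Finset.range (j + 1), (σ ^ (-((i : ℝ) * (1 / q)))) ^ q) ^ (1 / q) :=
          ENNReal.inner_le_Lp_mul_Lq _ _ _ conj
      _ = (∑ i ∈ Finset.range (j + 1), a i ^ p * σ ^ ((i : ℝ) * (p / q))) ^ (1 / p)
          * (∑ i ∈ Finset.range (j + 1), σ ^ (-(i : ℝ))) ^ (1 / q) := by
          congr 2
          · refine Finset.sum_congr rfl fun i _ => ?_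
            rw [ENNReal.mul_rpow_of_nonneg _ _ hp0.le, ← ENNReal.rpow_mul]
            congr 1
            field_simp
          · refine Finset.sum_congr rfl fun i _ => ?_
            rw [← ENNReal.rpow_mul]
            congr 1
            field_simp
      _ ≤ (∑ i ∈ Finset.range (j + 1), a i ^ p * σ ^ ((i : ℝ) * (p / q))) ^ (1 / p)
          * (σ ^ (-(j : ℝ)) * (1 - σ)⁻¹) ^ (1 / q) := by
          gcongr
          exact geom_tail_le σ hσ0 hσt j
  -- pointwise weighted bound
  have main : ∀ j : ℕ,
      ρ ^ j * (∑ i ∈ Finset.range (j + 1), a i) ^ p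
        ≤ ((1 - σ)⁻¹) ^ (p / q) *
            ∑ i ∈ Finset.range (j + 1), (a i ^ p * σ ^ ((i : ℝ) * (p / q))) * σ ^ (j : ℝ) := by
    intro j
    set X := ∑ i ∈ Finset.range (j + 1), a i ^ p * σ ^ ((i : ℝ) * (p / q)) with hX
    have eX : (X ^ (1 / p)) ^ p = X := by
      rw [← ENNReal.rpow_mul, one_div_mul_cancel hp0.ne', ENNReal.rpow_one]
    have eY : ((σ ^ (-(j : ℝ)) * (1 - σ)⁻¹) ^ (1 / q)) ^ p
        = σ ^ (-(j : ℝ) * (p / q)) * ((1 - σ)⁻¹) ^ (p / q) := by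
      rw [← ENNReal.rpow_mul,
        ENNReal.mul_rpow_of_nonneg _ _ (by positivity : (0:ℝ) ≤ 1 / q * p),
        ← ENNReal.rpow_mul,
        show -(j : ℝ) * (1 / q * p) = -(j : ℝ) * (p / q) by ring,
        show (1:ℝ) / q * p = p / q by ring]
    have eρ : ρ ^ j * σ ^ (-(j : ℝ) * (p / q)) = σ ^ (j : ℝ) := by
      have h1 : ρ ^ j = σ ^ ((j : ℝ) * p) := by rw [hρσ, ENNReal.rpow_natCast]
      rw [h1, ← ENNReal.rpow_add _ _ hσ0 hσt]
      congr 1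
      nlinarith [hpq2]
    calc ρ ^ j * (∑ i ∈ Finset.range (j + 1), a i) ^ p
        ≤ ρ ^ j * ((X ^ (1 / p)) * (σ ^ (-(j : ℝ)) * (1 - σ)⁻¹) ^ (1 / q)) ^ p := by
          gcongr
          exact holder j
      _ = ((1 - σ)⁻¹) ^ (p / q) * (X * σ ^ (j : ℝ)) := by
          rw [ENNReal.mul_rpow_of_nonneg _ _ hp0.le, eX, eY, ← eρ]
          ring
      _ = ((1 - σ)⁻¹) ^ (p / q) *
            ∑ i ∈ Finset.range (j + 1), (a i ^ p * σ ^ ((i : ℝ) * (p / q))) * σ ^ (j : ℝ) := by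
          rw [← Finset.sum_mul]
  -- sum up
  have inner_sum : ∀ i : ℕ,
      ∑' k : ℕ, (a i ^ p * σ ^ ((i : ℝ) * (p / q))) * σ ^ ((k + i : ℕ) : ℝ)
        = (ρ ^ i * a i ^ p) * (1 - σ)⁻¹ := by
    intro i
    have e1 : ∀ k : ℕ, (a i ^ p * σ ^ ((i : ℝ) * (p / q))) * σ ^ ((k + i : ℕ) : ℝ)
        = ((a i ^ p * σ ^ ((i : ℝ) * (p / q)) * σ ^ ((i : ℝ))) * σ ^ k) := by
      intro k
      push_cast
      rw [ENNReal.rpow_add _ _ hσ0 hσt, ← ENNReal.rpow_natCast σ k]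
      ring
    rw [tsum_congr e1, ENNReal.tsum_mul_left, ENNReal.tsum_geometric]
    have e2 : σ ^ ((i : ℝ) * (p / q)) * σ ^ ((i : ℝ)) = ρ ^ i := by
      rw [← ENNReal.rpow_add _ _ hσ0 hσt,
        show (i : ℝ) * (p / q) + (i : ℝ) = (i : ℝ) * p by nlinarith [hpq2], hρσ,
        ENNReal.rpow_natCast]
    rw [← e2]
    ring
  calc ∑' j : ℕ, ρ ^ j * (∑ i ∈ Finset.range (j + 1), a i) ^ p
      ≤ ∑' j : ℕ, ((1 - σ)⁻¹) ^ (p / q) *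
          ∑ i ∈ Finset.range (j + 1), (a i ^ p * σ ^ ((i : ℝ) * (p / q))) * σ ^ (j : ℝ) :=
        ENNReal.tsum_le_tsum main
    _ = ((1 - σ)⁻¹) ^ (p / q) * ∑' j : ℕ,
          ∑ i ∈ Finset.range (j + 1), (a i ^ p * σ ^ ((i : ℝ) * (p / q))) * σ ^ (j : ℝ) :=
        ENNReal.tsum_mul_left
    _ = ((1 - σ)⁻¹) ^ (p / q) * ∑' i : ℕ, ∑' k : ℕ,
          (a i ^ p * σ ^ ((i : ℝ) * (p / q))) * σ ^ ((k + i : ℕ) : ℝ) := by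
        rw [swap_sum (fun i j => (a i ^ p * σ ^ ((i : ℝ) * (p / q))) * σ ^ (j : ℝ))]
    _ = ((1 - σ)⁻¹) ^ (p / q) * ∑' i : ℕ, (ρ ^ i * a i ^ p) * (1 - σ)⁻¹ := by
        rw [tsum_congr inner_sum]
    _ = (((1 - σ)⁻¹) ^ (p / q) * (1 - σ)⁻¹) * ∑' i : ℕ, ρ ^ i * a i ^ p := by
        rw [ENNReal.tsum_mul_right]
        ring
    _ = ((1 - σ)⁻¹) ^ p * ∑' j : ℕ, ρ ^ j * a j ^ p := by
        congr 1
        have e3 : (1 - σ)⁻¹ ^ (p / q) * (1 - σ)⁻¹ ^ (1:ℝ) = (1 - σ)⁻¹ ^ p := by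
          rw [← ENNReal.rpow_add _ _ hinv0 hinvt, hpq2]
        simpa using e3

lemma const_ineq (p q r : ℝ) (hp : 1 < p) (hq : 1 < q) (hpq : 1 / p + 1 / q = 1)
    (hr0 : 0 < r) (hr1 : r < 1) :
    ((1 - r ^ (1 / p))⁻¹) ^ p
      ≤ (4 * (1 / (r * (1 - r))) ^ (1 / p) * (1 / (r ^ (1 - q) - 1)) ^ (1 / q)) ^ p := by
  have hp0 : (0:ℝ) < p := by linarith
  have hq0 : (0:ℝ) < q := by linarith
  have hpq2 : p + q = p * q := by field_simp at hpq; linarith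
  set s := r ^ (1 / p) with hs
  have hs0 : 0 < s := Real.rpow_pos_of_pos hr0 _
  have hs1 : s < 1 := Real.rpow_lt_one hr0.le hr1 (by positivity)
  have hsp : s ^ p = r := by
    rw [hs, ← Real.rpow_mul hr0.le, one_div_mul_cancel hp0.ne', Real.rpow_one]
  have hsq1 : s ^ q < 1 := Real.rpow_lt_one hs0.le hs1 hq0
  have hsq0 : 0 < s ^ q := Real.rpow_pos_of_pos hs0 _
  have h1s : 0 < 1 - s := by linarith
  have h1r : 0 < 1 - r := by linarith
  have h1sq : 0 < 1 - s ^ q := by linarith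
  -- Bernoulli bounds
  have bern : ∀ t : ℝ, 1 ≤ t → 1 - s ^ t ≤ t * (1 - s) := by
    intro t ht
    have := one_add_mul_self_le_rpow_one_add (by linarith : (-1:ℝ) ≤ s - 1) ht
    have h2 : (1 : ℝ) + (s - 1) = s := by ring
    rw [h2] at this
    nlinarith
  have hBr : 1 - r ≤ p * (1 - s) := by
    have := bern p hp.le; rw [hsp] at this; exact this
  have hBq : 1 - s ^ q ≤ q * (1 - s) := bern q hq.le
  -- q ^ (p/q) ≤ 4
  have hq4 : q ^ (p / q) ≤ 4 := by
    rw [Real.rpow_def_of_pos hq0]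
    have hlog : Real.log q ≤ q - 1 := Real.log_le_sub_one_of_pos hq0
    have e1 : (q - 1) * (p / q) = 1 := by field_simp; linarith
    have : Real.log q * (p / q) ≤ 1 := by
      calc Real.log q * (p / q) ≤ (q - 1) * (p / q) := by
            apply mul_le_mul_of_nonneg_right hlog (by positivity)
        _ = 1 := e1
    calc Real.exp (Real.log q * (p / q)) ≤ Real.exp 1 := Real.exp_le_exp.mpr this
      _ ≤ 4 := by linarith [Real.exp_one_lt_d9.le]
  -- p ≤ 4 ^ (p - 1)
  have hp4 : p ≤ (4 : ℝ) ^ (p - 1) := by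
    rw [Real.rpow_def_of_pos (by norm_num)]
    have hlog4 : (1 : ℝ) ≤ Real.log 4 := by
      have : (4:ℝ) = 2 ^ 2 := by norm_num
      rw [this, Real.log_pow]
      push_cast
      linarith [Real.log_two_gt_d9]
    calc p = 1 + (p - 1) * 1 := by ring
      _ ≤ 1 + (p - 1) * Real.log 4 := by nlinarith
      _ = 1 + Real.log 4 * (p - 1) := by ring
      _ ≤ Real.exp (Real.log 4 * (p - 1)) := by
          have := Real.add_one_le_exp (Real.log 4 * (p - 1))
          linarith
  -- core inequality
  have key : (1 - r) * (1 - s ^ q) ^ (p / q) ≤ 4 ^ p * (1 - s) ^ p := by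
    have c1 : (1 - s ^ q) ^ (p / q) ≤ (q * (1 - s)) ^ (p / q) :=
      Real.rpow_le_rpow h1sq.le hBq (by positivity)
    have c2 : (q * (1 - s)) ^ (p / q) = q ^ (p / q) * (1 - s) ^ (p / q) :=
      Real.mul_rpow hq0.le h1s.le
    have c3 : (1 - s) * (1 - s) ^ (p / q) = (1 - s) ^ p := by
      nth_rewrite 1 [← Real.rpow_one (1 - s)]
      rw [← Real.rpow_add h1s]
      congr 1
      field_simp
      linarith
    have c4 : (4:ℝ) ^ (p - 1) * 4 = 4 ^ p := by
      nth_rewrite 2 [← Real.rpow_one (4:ℝ)]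
      rw [← Real.rpow_add (by norm_num)]
      norm_num
    calc (1 - r) * (1 - s ^ q) ^ (p / q)
        ≤ (p * (1 - s)) * ((q * (1 - s)) ^ (p / q)) := by
          apply mul_le_mul hBr c1 (by positivity) (by positivity)
      _ = (p * q ^ (p / q)) * ((1 - s) * (1 - s) ^ (p / q)) := by rw [c2]; ring
      _ = (p * q ^ (p / q)) * (1 - s) ^ p := by rw [c3]
      _ ≤ ((4:ℝ) ^ (p - 1) * 4) * (1 - s) ^ p := by
          apply mul_le_mul_of_nonneg_right _ (by positivity)
          apply mul_le_mul hp4 hq4 (by positivity) (by positivity)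
      _ = 4 ^ p * (1 - s) ^ p := by rw [c4]
  -- compute RHS
  have hrq : r ^ (1 - q) = (s ^ q)⁻¹ := by
    rw [← hsp, ← Real.rpow_mul hs0.le, ← Real.rpow_neg hs0.le]
    congr 1
    nlinarith
  have hB : 1 / (r ^ (1 - q) - 1) = s ^ q / (1 - s ^ q) := by
    rw [hrq]
    rw [inv_eq_one_div]
    field_simp
  have hBpos : 0 < 1 / (r ^ (1 - q) - 1) := by rw [hB]; positivity
  have hApos : 0 < 1 / (r * (1 - r)) := by positivity
  have rhs_eq : (4 * (1 / (r * (1 - r))) ^ (1 / p) * (1 / (r ^ (1 - q) - 1)) ^ (1 / q)) ^ p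
      = 4 ^ p / ((1 - r) * (1 - s ^ q) ^ (p / q)) := by
    rw [Real.mul_rpow (by positivity) (Real.rpow_nonneg hBpos.le _),
      Real.mul_rpow (by norm_num) (Real.rpow_nonneg hApos.le _),
      ← Real.rpow_mul hApos.le, ← Real.rpow_mul hBpos.le,
      one_div_mul_cancel hp0.ne', Real.rpow_one, hB,
      show (1:ℝ) / q * p = p / q by ring,
      Real.div_rpow hsq0.le h1sq.le,
      show (s ^ q) ^ (p / q) = r by
        rw [← Real.rpow_mul hs0.le, show q * (p / q) = p by field_simp, hsp]]
    rw [eq_div_iff (by positivity : (0:ℝ) < (1 - r) * (1 - s ^ q) ^ (p / q)).ne']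
    field_simp
  rw [rhs_eq, Real.inv_rpow h1s.le, inv_eq_one_div,
    div_le_div_iff₀ (by positivity) (by positivity), one_mul]
  linarith [key]

/-- The weighted discrete Hardy inequality for the geometric weights
`u_i = C_γ r^i`, `r = 2^{-pβ-γ-1}`, with the explicit constant
`C = 4 (1/(r(1-r)))^{1/p} (1/(r^{1-q}-1))^{1/q}`. Indexing: `d n` stands for
`d_{n+1}` and `u (j+1) = C_γ r^{j+1}` is the weight of index `j+1 ≥ 1`. -/
theorem hardy_power_weights (γ p q β : ℝ) (hγ : 1 ≤ γ) (hp : 1 < p) (hq : 1 < q)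
    (hpq : 1 / p + 1 / q = 1) (hβ : (-γ - 1) / p < β) :
    let r : ℝ := 2 ^ (-p * β - γ - 1)
    let Cγ : ℝ := (1 - (2 : ℝ) ^ (-2 * (γ + 1))) / (γ + 1)
    let u : ℕ → ℝ := fun i => Cγ * r ^ (i : ℝ)
    let C : ℝ := 4 * (1 / (r * (1 - r))) ^ (1 / p) * (1 / (r ^ (1 - q) - 1)) ^ (1 / q)
    ∀ d : ℕ → ℝ, (∀ n, 0 ≤ d n) →
      ∑' j : ℕ, ENNReal.ofReal (u (j + 1)) *
          ENNReal.ofReal (∑ i ∈ Finset.range (j + 1), d i) ^ p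
        ≤ ENNReal.ofReal (C ^ p) *
          ∑' j : ℕ, ENNReal.ofReal (u (j + 1)) * ENNReal.ofReal (d j) ^ p := by
  intro r Cγ u C d hd
  have hp0 : (0:ℝ) < p := by linarith
  have hq0 : (0:ℝ) < q := by linarith
  have hr0 : 0 < r := Real.rpow_pos_of_pos two_pos _
  have hexp : -p * β - γ - 1 < 0 := by
    have := (div_lt_iff₀ hp0).mp hβ
    nlinarith
  have hr1 : r < 1 := Real.rpow_lt_one_of_one_lt_of_neg one_lt_two hexp
  have hγ1 : (0:ℝ) < γ + 1 := by linarith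
  have hCγ0 : 0 < Cγ := by
    have h2 : (2:ℝ) ^ (-2 * (γ + 1)) < 1 :=
      Real.rpow_lt_one_of_one_lt_of_neg one_lt_two (by nlinarith)
    exact div_pos (by linarith) hγ1
  set ρ : ℝ≥0∞ := ENNReal.ofReal r with hρdef
  set c : ℝ≥0∞ := ENNReal.ofReal Cγ with hcdef
  have hρ0 : ρ ≠ 0 := by simp [hρdef, hr0, ENNReal.ofReal_eq_zero, not_le]
  have hρ1 : ρ < 1 := by
    rw [hρdef, ← ENNReal.ofReal_one]
    exact ENNReal.ofReal_lt_ofReal_iff_of_nonneg hr0.le |>.mpr hr1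
  set a : ℕ → ℝ≥0∞ := fun j => ENNReal.ofReal (d j) with hadef
  have hu : ∀ j : ℕ, ENNReal.ofReal (u (j + 1)) = (c * ρ) * ρ ^ j := by
    intro j
    show ENNReal.ofReal (Cγ * r ^ (((j + 1 : ℕ)) : ℝ)) = (c * ρ) * ρ ^ j
    rw [Real.rpow_natCast, ENNReal.ofReal_mul hCγ0.le, ENNReal.ofReal_pow hr0.le,
      pow_succ']
    ring
  have hS : ∀ j : ℕ, ENNReal.ofReal (∑ i ∈ Finset.range (j + 1), d i)
      = ∑ i ∈ Finset.range (j + 1), a i :=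
    fun j => ENNReal.ofReal_sum_of_nonneg (fun i _ => hd i)
  -- rewrite both sides
  have lhs_eq : ∑' j : ℕ, ENNReal.ofReal (u (j + 1)) *
      ENNReal.ofReal (∑ i ∈ Finset.range (j + 1), d i) ^ p
      = (c * ρ) * ∑' j : ℕ, ρ ^ j * (∑ i ∈ Finset.range (j + 1), a i) ^ p := by
    rw [← ENNReal.tsum_mul_left]
    refine tsum_congr fun j => ?_
    rw [hu, hS]
    ring
  have rhs_eq : ∑' j : ℕ, ENNReal.ofReal (u (j + 1)) * ENNReal.ofReal (d j) ^ p
      = (c * ρ) * ∑' j : ℕ, ρ ^ j * a j ^ p := by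
    rw [← ENNReal.tsum_mul_left]
    refine tsum_congr fun j => ?_
    rw [hu]
    ring
  have hs1 : r ^ (1 / p) < 1 := Real.rpow_lt_one hr0.le hr1 (by positivity)
  have hKconv : ((1 - ρ ^ (1 / p))⁻¹) ^ p
      = ENNReal.ofReal (((1 - r ^ (1 / p))⁻¹) ^ p) := by
    rw [hρdef, ENNReal.ofReal_rpow_of_pos hr0,
      ← ENNReal.ofReal_one, ← ENNReal.ofReal_sub _ (Real.rpow_nonneg hr0.le _),
      ← ENNReal.ofReal_inv_of_pos (by linarith),
      ENNReal.ofReal_rpow_of_pos (inv_pos.mpr (by linarith))]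
  have hK : ((1 - ρ ^ (1 / p))⁻¹) ^ p ≤ ENNReal.ofReal (C ^ p) := by
    rw [hKconv]
    exact ENNReal.ofReal_le_ofReal (const_ineq p q r hp hq hpq hr0 hr1)
  calc ∑' j : ℕ, ENNReal.ofReal (u (j + 1)) *
      ENNReal.ofReal (∑ i ∈ Finset.range (j + 1), d i) ^ p
      = (c * ρ) * ∑' j : ℕ, ρ ^ j * (∑ i ∈ Finset.range (j + 1), a i) ^ p := lhs_eq
    _ ≤ (c * ρ) * (((1 - ρ ^ (1 / p))⁻¹) ^ p * ∑' j : ℕ, ρ ^ j * a j ^ p) := by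
        gcongr
        exact hardy_geom p q hp hq hpq ρ hρ0 hρ1 a
    _ ≤ (c * ρ) * (ENNReal.ofReal (C ^ p) * ∑' j : ℕ, ρ ^ j * a j ^ p) := by
        gcongr
    _ = ENNReal.ofReal (C ^ p) * ((c * ρ) * ∑' j : ℕ, ρ ^ j * a j ^ p) := by ring
    _ = ENNReal.ofReal (C ^ p) *
          ∑' j : ℕ, ENNReal.ofReal (u (j + 1)) * ENNReal.ofReal (d j) ^ p := by
        rw [rhs_eq]
end

section
/- Andersen–Heinig sufficiency: let p, q > 1 with 1/p + 1/q = 1, and let (u_n), (v_n) be sequences of positive reals. If A := sup_{k≥1} (sum_{i=k}^∞ u_i)^{1/p} (sum_{i=1}^k v_i^{1-q})^{1/q} < ∞, then for every non-negative sequence (a_n), (sum_{n≥1} u_n (sum_{k=1}^n a_k)^p)^{1/p} ≤ 4A (sum_{n≥1} v_n a_n^p)^{1/p}. -/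
open Finset

set_option maxHeartbeats 1000000


private lemma ah_self_le_two_rpow {x : ℝ} (hx : 0 ≤ x) : x ≤ (2:ℝ) ^ x := by
  have h2 : (2:ℝ) ^ x = Real.exp (x * Real.log 2) := by
    rw [Real.rpow_def_of_pos (by norm_num)]; ring_nf
  have hexp : ∀ t : ℝ, Real.exp 1 * t ≤ Real.exp t := by
    intro t
    have h := Real.add_one_le_exp (t - 1)
    have h' : Real.exp t = Real.exp 1 * Real.exp (t - 1) := by
      rw [← Real.exp_add]; ring_nf
    rw [h']
    nlinarith [Real.exp_pos (1:ℝ), Real.exp_pos (t-1)]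
  have hlog : (0.6931471803 : ℝ) < Real.log 2 := Real.log_two_gt_d9
  have he : (2.7182818283 : ℝ) < Real.exp 1 := Real.exp_one_gt_d9
  have h4 := hexp (x * Real.log 2)
  have key : (1:ℝ) ≤ Real.exp 1 * Real.log 2 := by nlinarith
  have h5 : x * 1 ≤ x * (Real.exp 1 * Real.log 2) := mul_le_mul_of_nonneg_left key hx
  rw [h2]
  nlinarith

private lemma ah_concave_step {r a b : ℝ} (hr0 : 0 < r) (hr1 : r ≤ 1)
    (ha : 0 ≤ a) (hab : a ≤ b) (hb : 0 < b) :
    r * ((b - a) * b ^ (r - 1)) ≤ b ^ r - a ^ r := by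
  set t := a / b with ht
  have ht0 : 0 ≤ t := div_nonneg ha hb.le
  have key : t ^ r ≤ (1 - r) * 1 + r * t := by
    have := Real.geom_mean_le_arith_mean2_weighted (by linarith : (0:ℝ) ≤ 1 - r)
      hr0.le zero_le_one ht0 (by ring)
    simpa using this
  have hbne : b ≠ 0 := hb.ne'
  have hatb : a = t * b := by rw [ht, div_mul_cancel₀ a hbne]
  have har : a ^ r = t ^ r * b ^ r := by
    rw [hatb, Real.mul_rpow ht0 hb.le]
  have hbr1 : b ^ (r - 1) = b ^ r / b := by
    rw [Real.rpow_sub hb, Real.rpow_one]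
  have e1 : (b - a) * (b ^ r / b) = (1 - t) * b ^ r := by
    rw [hatb]; field_simp
  rw [hbr1, e1, har]
  have hbr : 0 ≤ b ^ r := Real.rpow_nonneg hb.le r
  nlinarith [key, hbr]

private theorem ah_core (p q : ℝ) (hp : 1 < p) (hq : 1 < q) (hpq : 1 / p + 1 / q = 1)
    (u v : ℕ → ℝ) (hu : ∀ n, 0 < u n) (hv : ∀ n, 0 < v n) (hsu : Summable u)
    (A : ℝ)
    (hAH : ∀ k : ℕ, (∑' i : ℕ, u (k + i)) ^ (1/p) *
        (∑ i ∈ Finset.range (k + 1), v i ^ (1 - q)) ^ (1/q) ≤ A)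
    (a : ℕ → ℝ) (ha : ∀ n, 0 ≤ a n) (N : ℕ) :
    ∑ n ∈ Finset.range N, u n * (∑ k ∈ Finset.range (n + 1), a k) ^ p
      ≤ p * q ^ (p - 1) * A ^ p * ∑ k ∈ Finset.range N, v k * a k ^ p := by
  have hp0 : (0:ℝ) < p := lt_trans one_pos hp
  have hq0 : (0:ℝ) < q := lt_trans one_pos hq
  have hpne : p ≠ 0 := hp0.ne'
  have hqne : q ≠ 0 := hq0.ne'
  have hpq2 : p + q = p * q := by field_simp at hpq; linarith
  have h1q : 1 - 1/p = 1/q := by field_simp; linarith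
  have hpq3 : p / q = p - 1 := by rw [div_eq_iff hqne]; nlinarith
  have hqp3 : q / p = q - 1 := by rw [div_eq_iff hpne]; nlinarith
  set U : ℕ → ℝ := fun n => ∑' i, u (n + i) with hU
  set V : ℕ → ℝ := fun n => ∑ i ∈ Finset.range (n + 1), v i ^ (1 - q) with hV
  have hsum_tail : ∀ n, Summable (fun i => u (n + i)) := by
    intro n
    exact ((summable_nat_add_iff n).2 hsu).congr fun i => congrArg u (Nat.add_comm i n)
  have hUpos : ∀ n, 0 < U n := by
    intro n
    have h0 : u (n + 0) ≤ U n := Summable.le_tsum (hsum_tail n) 0 (fun i _ => (hu _).le)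
    exact lt_of_lt_of_le (hu (n + 0)) h0
  have hUrec : ∀ n, U n = u n + U (n + 1) := by
    intro n
    have h1 : U n = u (n + 0) + ∑' i, u (n + (i + 1)) := Summable.tsum_eq_zero_add (hsum_tail n)
    have h2 : (∑' i, u (n + (i + 1))) = U (n + 1) := tsum_congr fun i => congrArg u (by omega)
    rw [h1, h2, Nat.add_zero]
  have hVpos : ∀ n, 0 < V n := by
    intro n
    exact Finset.sum_pos (fun i _ => Real.rpow_pos_of_pos (hv i) _) (by simp)
  have hVrec : ∀ n, V (n + 1) = V n + v (n + 1) ^ (1 - q) := by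
    intro n; simp only [hV]; rw [Finset.sum_range_succ]
  have hAHr : ∀ k, U k ^ (1/p) * V k ^ (1/q) ≤ A := hAH
  have hApos : 0 < A :=
    lt_of_lt_of_le (mul_pos (Real.rpow_pos_of_pos (hUpos 0) _)
      (Real.rpow_pos_of_pos (hVpos 0) _)) (hAHr 0)
  -- L1 : telescoping for V
  have L1 : ∀ n, ∑ k ∈ Finset.range (n + 1), v k ^ (1 - q) * V k ^ (-(1/p))
      ≤ q * V n ^ (1/q) := by
    intro n
    induction n with
    | zero =>
      rw [Finset.sum_range_one]
      have hV0 : v 0 ^ (1 - q) = V 0 := by simp [hV]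
      rw [hV0]
      have h2 : V 0 * V 0 ^ (-(1/p)) = V 0 ^ (1/q) := by
        have e : (1:ℝ) + -(1/p) = 1/q := by linarith
        have h3 := Real.rpow_add (hVpos 0) 1 (-(1/p))
        rw [Real.rpow_one, e] at h3
        exact h3.symm
      rw [h2]
      nlinarith [Real.rpow_pos_of_pos (hVpos 0) (1/q)]
    | succ n ih =>
      rw [Finset.sum_range_succ]
      have hVlt : V n < V (n + 1) := by
        rw [hVrec]; nlinarith [Real.rpow_pos_of_pos (hv (n+1)) (1-q)]
      have hstep := ah_concave_step (r := 1/q) (a := V n) (b := V (n + 1))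
        (by positivity) (by rw [div_le_one hq0]; linarith)
        (hVpos n).le hVlt.le (lt_trans (hVpos n) hVlt)
      have hd : V (n + 1) - V n = v (n + 1) ^ (1 - q) := by rw [hVrec]; ring
      have he : (1:ℝ)/q - 1 = -(1/p) := by linarith
      rw [hd, he] at hstep
      have hq' : v (n + 1) ^ (1 - q) * V (n + 1) ^ (-(1/p))
          ≤ q * (V (n + 1) ^ (1/q) - V n ^ (1/q)) := by
        have h3 := mul_le_mul_of_nonneg_left hstep hq0.le
        calc v (n + 1) ^ (1 - q) * V (n + 1) ^ (-(1/p))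
            = q * (1/q * (v (n + 1) ^ (1 - q) * V (n + 1) ^ (-(1/p)))) := by
              field_simp
          _ ≤ q * (V (n + 1) ^ (1/q) - V n ^ (1/q)) := h3
      linarith
  -- L2 : telescoping for U
  have L2 : ∀ k M, k ≤ M → ∑ n ∈ Finset.Ico k M, u n * U n ^ (-(1/q))
      ≤ p * (U k ^ (1/p) - U M ^ (1/p)) := by
    intro k M hkM
    induction M, hkM using Nat.le_induction with
    | base => simp
    | succ M hkM ih =>
      rw [Finset.sum_Ico_succ_top hkM]
      have hstep := ah_concave_step (r := 1/p) (a := U (M + 1)) (b := U M)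
        (by positivity) (by rw [div_le_one hp0]; linarith)
        (hUpos (M + 1)).le (by rw [hUrec M]; linarith [hu M]) (hUpos M)
      have hd : U M - U (M + 1) = u M := by rw [hUrec M]; ring
      have he : (1:ℝ)/p - 1 = -(1/q) := by linarith
      rw [hd, he] at hstep
      have hq' : u M * U M ^ (-(1/q)) ≤ p * (U M ^ (1/p) - U (M + 1) ^ (1/p)) := by
        have h3 := mul_le_mul_of_nonneg_left hstep hp0.le
        calc u M * U M ^ (-(1/q))
            = p * (1/p * (u M * U M ^ (-(1/q)))) := by field_simp
          _ ≤ p * (U M ^ (1/p) - U (M + 1) ^ (1/p)) := h3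
      linarith
  -- Hölder step
  have hconj : p.HolderConjugate q := Real.holderConjugate_iff.2 ⟨hp, by
    rw [inv_eq_one_div, inv_eq_one_div]; exact hpq⟩
  set X : ℕ → ℝ := fun n => ∑ k ∈ Finset.range (n + 1), v k * a k ^ p * V k ^ (1/q) with hX
  set Y : ℕ → ℝ := fun n => ∑ k ∈ Finset.range (n + 1), v k ^ (1 - q) * V k ^ (-(1/p)) with hY
  have hXnn : ∀ n, 0 ≤ X n := fun n => Finset.sum_nonneg fun k _ =>
    mul_nonneg (mul_nonneg (hv k).le (Real.rpow_nonneg (ha k) _)) (Real.rpow_nonneg (hVpos k).le _)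
  have hYnn : ∀ n, 0 ≤ Y n := fun n => Finset.sum_nonneg fun k _ =>
    mul_nonneg (Real.rpow_nonneg (hv k).le _) (Real.rpow_nonneg (hVpos k).le _)
  have Hold : ∀ n, (∑ k ∈ Finset.range (n + 1), a k) ^ p ≤ X n * Y n ^ (p - 1) := by
    intro n
    set f : ℕ → ℝ := fun k => a k * (v k * V k ^ (1/q)) ^ (1/p) with hf
    set g : ℕ → ℝ := fun k => (v k * V k ^ (1/q)) ^ (-(1/p)) with hg
    have hxpos : ∀ k, 0 < v k * V k ^ (1/q) := fun k =>
      mul_pos (hv k) (Real.rpow_pos_of_pos (hVpos k) _)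
    have hfg : ∀ k, a k = f k * g k := by
      intro k
      simp only [hf, hg]
      rw [mul_assoc, ← Real.rpow_add (hxpos k)]
      simp
    have hfnn : ∀ k, 0 ≤ f k := fun k => mul_nonneg (ha k) (Real.rpow_nonneg (hxpos k).le _)
    have hgnn : ∀ k, 0 ≤ g k := fun k => Real.rpow_nonneg (hxpos k).le _
    have hfp : ∀ k, f k ^ p = v k * a k ^ p * V k ^ (1/q) := by
      intro k
      simp only [hf]
      rw [Real.mul_rpow (ha k) (Real.rpow_nonneg (hxpos k).le _),
        ← Real.rpow_mul (hxpos k).le, one_div_mul_cancel hpne, Real.rpow_one]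
      ring
    have hgq : ∀ k, g k ^ q = v k ^ (1 - q) * V k ^ (-(1/p)) := by
      intro k
      simp only [hg]
      rw [← Real.rpow_mul (hxpos k).le]
      have e1 : -(1/p) * q = 1 - q := by
        field_simp
        nlinarith
      rw [e1, Real.mul_rpow (hv k).le (Real.rpow_nonneg (hVpos k).le _),
        ← Real.rpow_mul (hVpos k).le]
      congr 2
      field_simp
      nlinarith
    have hH : ∑ k ∈ Finset.range (n + 1), f k * g k
        ≤ (∑ k ∈ Finset.range (n + 1), f k ^ p) ^ (1/p) *
          (∑ k ∈ Finset.range (n + 1), g k ^ q) ^ (1/q) :=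
      Real.inner_le_Lp_mul_Lq_of_nonneg _ hconj (fun k _ => hfnn k) (fun k _ => hgnn k)
    have hXe : ∑ k ∈ Finset.range (n + 1), f k ^ p = X n :=
      Finset.sum_congr rfl fun k _ => hfp k
    have hYe : ∑ k ∈ Finset.range (n + 1), g k ^ q = Y n :=
      Finset.sum_congr rfl fun k _ => hgq k
    have hae : ∑ k ∈ Finset.range (n + 1), a k = ∑ k ∈ Finset.range (n + 1), f k * g k :=
      Finset.sum_congr rfl fun k _ => hfg k
    rw [hXe, hYe] at hH
    have hfgnn : 0 ≤ ∑ k ∈ Finset.range (n + 1), f k * g k :=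
      Finset.sum_nonneg fun k _ => mul_nonneg (hfnn k) (hgnn k)
    rw [hae]
    calc (∑ k ∈ Finset.range (n + 1), f k * g k) ^ p
        ≤ (X n ^ (1/p) * Y n ^ (1/q)) ^ p := Real.rpow_le_rpow hfgnn hH hp0.le
      _ = X n * Y n ^ (p - 1) := by
          rw [Real.mul_rpow (Real.rpow_nonneg (hXnn n) _) (Real.rpow_nonneg (hYnn n) _),
            ← Real.rpow_mul (hXnn n), ← Real.rpow_mul (hYnn n),
            one_div_mul_cancel hpne, Real.rpow_one]
          congr 2
          rw [← hpq3]
          ring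
  -- Step 3a : pointwise bound on V n ^ ((1/q)*(p-1))
  have step3a : ∀ n, V n ^ ((1/q) * (p - 1)) ≤ A ^ (p - 1) * U n ^ (-(1/q)) := by
    intro n
    have hUp : 0 < U n ^ (1/p) := Real.rpow_pos_of_pos (hUpos n) _
    have h1 : V n ^ (1/q) ≤ A / U n ^ (1/p) := by
      rw [le_div_iff₀ hUp]
      calc V n ^ (1/q) * U n ^ (1/p) = U n ^ (1/p) * V n ^ (1/q) := by ring
        _ ≤ A := hAHr n
    have h2 := Real.rpow_le_rpow (Real.rpow_nonneg (hVpos n).le _) h1 (by linarith : (0:ℝ) ≤ p - 1)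
    rw [← Real.rpow_mul (hVpos n).le] at h2
    have h3 : (A / U n ^ (1/p)) ^ (p - 1)
        = A ^ (p - 1) * U n ^ (-(1/q)) := by
      rw [Real.div_rpow hApos.le (Real.rpow_nonneg (hUpos n).le _),
        ← Real.rpow_mul (hUpos n).le]
      have e2 : 1/p * (p - 1) = 1/q := by
        field_simp
        nlinarith
      rw [e2, div_eq_mul_inv, ← Real.rpow_neg (hUpos n).le]
    rwa [h3] at h2
  -- Step 3c : U k ^ (1/p) ≤ A * V k ^ (-(1/q))
  have step3c : ∀ k, U k ^ (1/p) ≤ A * V k ^ (-(1/q)) := by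
    intro k
    have hVq : 0 < V k ^ (1/q) := Real.rpow_pos_of_pos (hVpos k) _
    rw [Real.rpow_neg (hVpos k).le, ← div_eq_mul_inv, le_div_iff₀ hVq]
    exact hAHr k
  -- inner tail bound
  have inner_bound : ∀ k M, k ≤ M →
      ∑ n ∈ Finset.Ico k M, u n * V n ^ ((1/q) * (p - 1))
        ≤ p * A ^ p * V k ^ (-(1/q)) := by
    intro k M hkM
    have hA1 : 0 ≤ A ^ (p - 1) := Real.rpow_nonneg hApos.le _
    calc ∑ n ∈ Finset.Ico k M, u n * V n ^ ((1/q) * (p - 1))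
        ≤ ∑ n ∈ Finset.Ico k M, u n * (A ^ (p - 1) * U n ^ (-(1/q))) := by
          refine Finset.sum_le_sum fun n _ => ?_
          exact mul_le_mul_of_nonneg_left (step3a n) (hu n).le
      _ = A ^ (p - 1) * ∑ n ∈ Finset.Ico k M, u n * U n ^ (-(1/q)) := by
          rw [Finset.mul_sum]; exact Finset.sum_congr rfl fun n _ => by ring
      _ ≤ A ^ (p - 1) * (p * (U k ^ (1/p) - U M ^ (1/p))) :=
          mul_le_mul_of_nonneg_left (L2 k M hkM) hA1
      _ ≤ A ^ (p - 1) * (p * U k ^ (1/p)) := by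
          have h6 := Real.rpow_nonneg (hUpos M).le (1/p)
          exact mul_le_mul_of_nonneg_left
            (mul_le_mul_of_nonneg_left (by linarith) hp0.le) hA1
      _ ≤ A ^ (p - 1) * (p * (A * V k ^ (-(1/q)))) := by
          refine mul_le_mul_of_nonneg_left ?_ hA1
          exact mul_le_mul_of_nonneg_left (step3c k) hp0.le
      _ = p * A ^ p * V k ^ (-(1/q)) := by
          have : A ^ (p - 1) * A = A ^ p := by
            nth_rewrite 2 [← Real.rpow_one A]
            rw [← Real.rpow_add hApos]
            ring_nf
          calc A ^ (p - 1) * (p * (A * V k ^ (-(1/q))))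
              = p * (A ^ (p - 1) * A) * V k ^ (-(1/q)) := by ring
            _ = p * A ^ p * V k ^ (-(1/q)) := by rw [this]
  -- Main chain
  have key1 : ∀ n, u n * (∑ k ∈ Finset.range (n + 1), a k) ^ p
      ≤ q ^ (p - 1) * ∑ k ∈ Finset.range (n + 1),
          (v k * a k ^ p * V k ^ (1/q)) * (u n * V n ^ ((1/q) * (p - 1))) := by
    intro n
    have h1 : u n * (∑ k ∈ Finset.range (n + 1), a k) ^ p
        ≤ u n * (X n * Y n ^ (p - 1)) :=
      mul_le_mul_of_nonneg_left (Hold n) (hu n).le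
    have h2 : Y n ^ (p - 1) ≤ (q * V n ^ (1/q)) ^ (p - 1) :=
      Real.rpow_le_rpow (hYnn n) (L1 n) (by linarith)
    have h3 : (q * V n ^ (1/q)) ^ (p - 1) = q ^ (p - 1) * V n ^ ((1/q) * (p - 1)) := by
      rw [Real.mul_rpow hq0.le (Real.rpow_nonneg (hVpos n).le _),
        ← Real.rpow_mul (hVpos n).le]
    have h4 : u n * (X n * Y n ^ (p - 1))
        ≤ u n * (X n * (q ^ (p - 1) * V n ^ ((1/q) * (p - 1)))) := by
      rw [← h3]
      exact mul_le_mul_of_nonneg_left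
        (mul_le_mul_of_nonneg_left h2 (hXnn n)) (hu n).le
    have h5 : u n * (X n * (q ^ (p - 1) * V n ^ ((1/q) * (p - 1))))
        = q ^ (p - 1) * ∑ k ∈ Finset.range (n + 1),
          (v k * a k ^ p * V k ^ (1/q)) * (u n * V n ^ ((1/q) * (p - 1))) := by
      simp only [hX]
      rw [← Finset.sum_mul]
      ring
    rw [h5] at h4
    exact le_trans h1 h4
  have tnn : ∀ k, 0 ≤ v k * a k ^ p * V k ^ (1/q) := fun k =>
    mul_nonneg (mul_nonneg (hv k).le (Real.rpow_nonneg (ha k) _))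
      (Real.rpow_nonneg (hVpos k).le _)
  have hVone : ∀ k, V k ^ (1/q) * V k ^ (-(1/q)) = 1 := fun k => by
    rw [← Real.rpow_add (hVpos k)]; simp
  have hqpow : (0:ℝ) ≤ q ^ (p - 1) := Real.rpow_nonneg hq0.le _
  calc ∑ n ∈ Finset.range N, u n * (∑ k ∈ Finset.range (n + 1), a k) ^ p
      ≤ ∑ n ∈ Finset.range N, q ^ (p - 1) * ∑ k ∈ Finset.range (n + 1),
          (v k * a k ^ p * V k ^ (1/q)) * (u n * V n ^ ((1/q) * (p - 1))) :=
        Finset.sum_le_sum fun n _ => key1 n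
    _ = q ^ (p - 1) * ∑ n ∈ Finset.range N, ∑ k ∈ Finset.range (n + 1),
          (v k * a k ^ p * V k ^ (1/q)) * (u n * V n ^ ((1/q) * (p - 1))) := by
        rw [Finset.mul_sum]
    _ = q ^ (p - 1) * ∑ k ∈ Finset.range N, ∑ n ∈ Finset.Ico k N,
          (v k * a k ^ p * V k ^ (1/q)) * (u n * V n ^ ((1/q) * (p - 1))) := by
        congr 1
        refine Finset.sum_comm' ?_
        intro n k
        simp only [Finset.mem_range, Finset.mem_Ico]
        omega
    _ = q ^ (p - 1) * ∑ k ∈ Finset.range N,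
          (v k * a k ^ p * V k ^ (1/q)) * ∑ n ∈ Finset.Ico k N,
            u n * V n ^ ((1/q) * (p - 1)) := by
        congr 1
        exact Finset.sum_congr rfl fun k _ => (Finset.mul_sum _ _ _).symm
    _ ≤ q ^ (p - 1) * ∑ k ∈ Finset.range N,
          (v k * a k ^ p * V k ^ (1/q)) * (p * A ^ p * V k ^ (-(1/q))) := by
        refine mul_le_mul_of_nonneg_left (Finset.sum_le_sum fun k hk => ?_) hqpow
        exact mul_le_mul_of_nonneg_left
          (inner_bound k N (Finset.mem_range.1 hk).le) (tnn k)
    _ = p * q ^ (p - 1) * A ^ p * ∑ k ∈ Finset.range N, v k * a k ^ p := by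
        have hpt : ∀ k, (v k * a k ^ p * V k ^ (1/q)) * (p * A ^ p * V k ^ (-(1/q)))
            = p * A ^ p * (v k * a k ^ p) := by
          intro k
          linear_combination (p * A ^ p * (v k * a k ^ p)) * hVone k
        rw [Finset.sum_congr rfl fun k _ => hpt k, ← Finset.mul_sum]
        ring

/-- Andersen–Heinig sufficiency: if the quantity
`A = sup_k (∑_{i=k}^∞ u_i)^{1/p} (∑_{i=1}^k v_i^{1-q})^{1/q}` is finite (bounded by the
real number `A`), then the weighted discrete Hardy inequality holds with constant `4A`.
Indexing: `u n`, `v n`, `a n` stand for the terms of index `n+1 ≥ 1`; the tail sum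
`∑_{i=k}^∞ u_i` is `∑' i, u (k + i)` (over indices shifted by one) and may a priori be
infinite, hence is taken in `[0,∞]`. -/
theorem andersen_heinig_sufficiency (p q : ℝ) (hp : 1 < p) (hq : 1 < q)
    (hpq : 1 / p + 1 / q = 1) (u v : ℕ → ℝ) (hu : ∀ n, 0 < u n) (hv : ∀ n, 0 < v n)
    (A : ℝ) (hA : 0 ≤ A)
    (hAH : ∀ k : ℕ,
      (∑' i : ℕ, ENNReal.ofReal (u (k + i))) ^ (1 / p) *
          ENNReal.ofReal (∑ i ∈ Finset.range (k + 1), v i ^ (1 - q)) ^ (1 / q)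
        ≤ ENNReal.ofReal A) :
    ∀ a : ℕ → ℝ, (∀ n, 0 ≤ a n) →
      (∑' n : ℕ, ENNReal.ofReal (u n) *
          ENNReal.ofReal (∑ k ∈ Finset.range (n + 1), a k) ^ p) ^ (1 / p)
        ≤ ENNReal.ofReal (4 * A) *
          (∑' n : ℕ, ENNReal.ofReal (v n) * ENNReal.ofReal (a n) ^ p) ^ (1 / p) := by
  intro a ha
  have hp0 : (0:ℝ) < p := lt_trans one_pos hp
  have hq0 : (0:ℝ) < q := lt_trans one_pos hq
  have hpne : p ≠ 0 := hp0.ne'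
  have hqne : q ≠ 0 := hq0.ne'
  have hpq2 : p + q = p * q := by field_simp at hpq; linarith
  have hqp1 : q * (p - 1) = p := by nlinarith
  -- Summability of u
  have hVknn : ∀ k : ℕ, 0 ≤ ∑ i ∈ Finset.range (k + 1), v i ^ (1 - q) := fun k =>
    Finset.sum_nonneg fun i _ => (Real.rpow_pos_of_pos (hv i) _).le
  have hT0 : (∑' i : ℕ, ENNReal.ofReal (u (0 + i))) ≠ ⊤ := by
    intro hT
    have h0 := hAH 0
    have hVpos0 : (0:ℝ) < ∑ i ∈ Finset.range (0 + 1), v i ^ (1 - q) := by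
      simp only [Nat.zero_add, Finset.sum_range_one]
      exact Real.rpow_pos_of_pos (hv 0) _
    have hVne : ENNReal.ofReal (∑ i ∈ Finset.range (0 + 1), v i ^ (1 - q)) ^ (1/q) ≠ 0 := by
      apply ne_of_gt
      apply ENNReal.rpow_pos (by simpa [ENNReal.ofReal_pos] using hVpos0) ENNReal.ofReal_ne_top
    rw [hT, ENNReal.top_rpow_of_pos (by positivity), ENNReal.top_mul hVne] at h0
    exact ENNReal.ofReal_ne_top (top_le_iff.mp h0)
  have hsu : Summable u := by
    have h1 := ENNReal.summable_toReal hT0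
    refine h1.congr fun i => ?_
    simp only [Nat.zero_add]
    exact ENNReal.toReal_ofReal (hu i).le
  have hsum_tail : ∀ k, Summable (fun i => u (k + i)) := fun k =>
    ((summable_nat_add_iff k).2 hsu).congr fun i => congrArg u (Nat.add_comm i k)
  -- Real form of the Andersen–Heinig condition
  have hAHreal : ∀ k : ℕ, (∑' i : ℕ, u (k + i)) ^ (1/p) *
      (∑ i ∈ Finset.range (k + 1), v i ^ (1 - q)) ^ (1/q) ≤ A := by
    intro k
    have h1 := hAH k
    have htnn : 0 ≤ ∑' i : ℕ, u (k + i) := tsum_nonneg fun i => (hu _).le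
    rw [← ENNReal.ofReal_tsum_of_nonneg (fun i => (hu _).le) (hsum_tail k),
      ENNReal.ofReal_rpow_of_nonneg htnn (by positivity),
      ENNReal.ofReal_rpow_of_nonneg (hVknn k) (by positivity),
      ← ENNReal.ofReal_mul (Real.rpow_nonneg htnn _)] at h1
    exact (ENNReal.ofReal_le_ofReal_iff hA).1 h1
  -- constant comparison
  have hCle : p * q ^ (p - 1) * A ^ p ≤ (4 * A) ^ p := by
    have h1 : p ≤ (2:ℝ) ^ p := ah_self_le_two_rpow hp0.le
    have h2 : q ^ (p - 1) ≤ (2:ℝ) ^ p := by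
      have h3 : q ^ (p - 1) ≤ ((2:ℝ) ^ q) ^ (p - 1) :=
        Real.rpow_le_rpow hq0.le (ah_self_le_two_rpow hq0.le) (by linarith)
      rwa [← Real.rpow_mul (by norm_num : (0:ℝ) ≤ 2), hqp1] at h3
    have h4 : p * q ^ (p - 1) ≤ (2:ℝ) ^ p * (2:ℝ) ^ p := by
      have := Real.rpow_nonneg (by norm_num : (0:ℝ) ≤ 2) p
      nlinarith [Real.rpow_nonneg hq0.le (p - 1)]
    have h5 : (2:ℝ) ^ p * (2:ℝ) ^ p = (4:ℝ) ^ p := by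
      rw [← Real.mul_rpow (by norm_num) (by norm_num)]
      norm_num
    have h6 : (4 * A) ^ p = 4 ^ p * A ^ p :=
      Real.mul_rpow (by norm_num) hA
    rw [h6]
    have hAp : 0 ≤ A ^ p := Real.rpow_nonneg hA _
    nlinarith
  -- the key tsum inequality
  set C := p * q ^ (p - 1) * A ^ p with hC
  have hC0 : 0 ≤ C := by
    have : 0 ≤ q ^ (p - 1) := Real.rpow_nonneg hq0.le _
    have : 0 ≤ A ^ p := Real.rpow_nonneg hA _
    positivity
  have hterm1 : ∀ n, ENNReal.ofReal (u n) *
      ENNReal.ofReal (∑ k ∈ Finset.range (n + 1), a k) ^ p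
      = ENNReal.ofReal (u n * (∑ k ∈ Finset.range (n + 1), a k) ^ p) := by
    intro n
    rw [ENNReal.ofReal_rpow_of_nonneg (Finset.sum_nonneg fun k _ => ha k) hp0.le,
      ← ENNReal.ofReal_mul (hu n).le]
  have hterm2 : ∀ n, ENNReal.ofReal (v n) * ENNReal.ofReal (a n) ^ p
      = ENNReal.ofReal (v n * a n ^ p) := by
    intro n
    rw [ENNReal.ofReal_rpow_of_nonneg (ha n) hp0.le, ← ENNReal.ofReal_mul (hv n).le]
  have key : (∑' n : ℕ, ENNReal.ofReal (u n) *
      ENNReal.ofReal (∑ k ∈ Finset.range (n + 1), a k) ^ p)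
      ≤ ENNReal.ofReal ((4 * A) ^ p) *
        ∑' n : ℕ, ENNReal.ofReal (v n) * ENNReal.ofReal (a n) ^ p := by
    rw [tsum_congr hterm1, tsum_congr hterm2]
    refine ENNReal.tsum_le_of_sum_range_le ?_
    intro N
    calc ∑ n ∈ Finset.range N,
          ENNReal.ofReal (u n * (∑ k ∈ Finset.range (n + 1), a k) ^ p)
        = ENNReal.ofReal (∑ n ∈ Finset.range N,
            u n * (∑ k ∈ Finset.range (n + 1), a k) ^ p) :=
          (ENNReal.ofReal_sum_of_nonneg fun n _ => mul_nonneg (hu n).le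
            (Real.rpow_nonneg (Finset.sum_nonneg fun k _ => ha k) p)).symm
      _ ≤ ENNReal.ofReal (C * ∑ k ∈ Finset.range N, v k * a k ^ p) :=
          ENNReal.ofReal_le_ofReal
            (ah_core p q hp hq hpq u v hu hv hsu A hAHreal a ha N)
      _ = ENNReal.ofReal C * ENNReal.ofReal (∑ k ∈ Finset.range N, v k * a k ^ p) :=
          ENNReal.ofReal_mul hC0
      _ ≤ ENNReal.ofReal ((4 * A) ^ p) *
            ENNReal.ofReal (∑ k ∈ Finset.range N, v k * a k ^ p) :=
          mul_le_mul_left (ENNReal.ofReal_le_ofReal hCle) _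
      _ ≤ ENNReal.ofReal ((4 * A) ^ p) *
            ∑' n : ℕ, ENNReal.ofReal (v n * a n ^ p) := by
          gcongr
          rw [ENNReal.ofReal_sum_of_nonneg fun i _ =>
            mul_nonneg (hv i).le (Real.rpow_nonneg (ha i) p)]
          exact ENNReal.sum_le_tsum _
  -- conclude by taking 1/p powers
  have h7 : (0:ℝ) ≤ 1/p := by positivity
  have h4A : (0:ℝ) ≤ 4 * A := by linarith
  calc (∑' n : ℕ, ENNReal.ofReal (u n) *
        ENNReal.ofReal (∑ k ∈ Finset.range (n + 1), a k) ^ p) ^ (1/p)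
      ≤ (ENNReal.ofReal ((4 * A) ^ p) *
          ∑' n : ℕ, ENNReal.ofReal (v n) * ENNReal.ofReal (a n) ^ p) ^ (1/p) :=
        ENNReal.rpow_le_rpow key h7
    _ = ENNReal.ofReal (4 * A) *
        (∑' n : ℕ, ENNReal.ofReal (v n) * ENNReal.ofReal (a n) ^ p) ^ (1/p) := by
        rw [ENNReal.mul_rpow_of_nonneg _ _ h7,
          ENNReal.ofReal_rpow_of_nonneg (Real.rpow_nonneg h4A p) h7,
          ← Real.rpow_mul h4A, mul_one_div_cancel hpne, Real.rpow_one]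
end

section
/- Andersen–Heinig necessity: let p, q > 1 with 1/p + 1/q = 1, let (u_n), (v_n) be positive sequences, and suppose C > 0 is such that (sum_{n≥1} u_n (sum_{k=1}^n a_k)^p)^{1/p} ≤ C (sum_{n≥1} v_n a_n^p)^{1/p} for every non-negative sequence (a_n). Then for every k ≥ 1, (sum_{i=k}^∞ u_i)^{1/p} (sum_{i=1}^k v_i^{1-q})^{1/q} ≤ C. -/
open Finset

/-- Andersen–Heinig necessity: if the weighted discrete Hardy inequality holds with
constant `C` for every non-negative sequence, then the Andersen–Heinig quantity is
bounded by `C`. Indexing as in the sufficiency statement: index `n : ℕ` stands for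
`n+1 ≥ 1`. -/
theorem andersen_heinig_necessity (p q : ℝ) (hp : 1 < p) (hq : 1 < q)
    (hpq : 1 / p + 1 / q = 1) (u v : ℕ → ℝ) (hu : ∀ n, 0 < u n) (hv : ∀ n, 0 < v n)
    (C : ℝ) (hC : 0 < C)
    (hHardy : ∀ a : ℕ → ℝ, (∀ n, 0 ≤ a n) →
      (∑' n : ℕ, ENNReal.ofReal (u n) *
          ENNReal.ofReal (∑ k ∈ Finset.range (n + 1), a k) ^ p) ^ (1 / p)
        ≤ ENNReal.ofReal C *
          (∑' n : ℕ, ENNReal.ofReal (v n) * ENNReal.ofReal (a n) ^ p) ^ (1 / p)) :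
    ∀ k : ℕ,
      (∑' i : ℕ, ENNReal.ofReal (u (k + i))) ^ (1 / p) *
          ENNReal.ofReal (∑ i ∈ Finset.range (k + 1), v i ^ (1 - q)) ^ (1 / q)
        ≤ ENNReal.ofReal C := by
  intro k
  have hp0 : (0:ℝ) < p := lt_trans one_pos hp
  have hq0 : (0:ℝ) < q := lt_trans one_pos hq
  have hpne : p ≠ 0 := ne_of_gt hp0
  have hpq' : p * q = p + q := by
    field_simp at hpq
    linarith [hpq]
  have hkey : 1 + (1 - q) * p = 1 - q := by nlinarith [hpq']
  -- the test sequence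
  set a : ℕ → ℝ := fun n => if n ≤ k then v n ^ (1 - q) else 0 with ha
  have ha_nonneg : ∀ n, 0 ≤ a n := by
    intro n
    simp only [ha]
    split
    · exact le_of_lt (Real.rpow_pos_of_pos (hv n) _)
    · exact le_refl 0
  set S : ℝ := ∑ i ∈ Finset.range (k + 1), v i ^ (1 - q) with hS
  have hS_pos : 0 < S := by
    apply Finset.sum_pos
    · intro i _
      exact Real.rpow_pos_of_pos (hv i) _
    · exact Finset.nonempty_range_iff.mpr (Nat.succ_ne_zero k)
  set T : ENNReal := ENNReal.ofReal S with hT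
  have hT0 : T ≠ 0 := ne_of_gt (ENNReal.ofReal_pos.mpr hS_pos)
  have hTt : T ≠ ⊤ := ENNReal.ofReal_ne_top
  -- partial sums of a for n ≥ k equal S
  have hpartial : ∀ n, k ≤ n → (∑ j ∈ Finset.range (n + 1), a j) = S := by
    intro n hn
    rw [hS, ← Finset.sum_subset (Finset.range_subset_range.mpr (by omega : k + 1 ≤ n + 1))]
    · apply Finset.sum_congr rfl
      intro i hi
      simp only [Finset.mem_range] at hi
      simp [ha, Nat.lt_succ_iff.mp hi]
    · intro i _ hi
      simp only [Finset.mem_range, Nat.lt_succ_iff, not_le] at hi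
      simp [ha, not_le.mpr hi]
  -- RHS sum evaluates to T
  have hRHS : (∑' n : ℕ, ENNReal.ofReal (v n) * ENNReal.ofReal (a n) ^ p) = T := by
    rw [tsum_eq_sum (s := Finset.range (k + 1)) (by
      intro n hn
      simp only [Finset.mem_range, Nat.lt_succ_iff, not_le] at hn
      simp [ha, not_le.mpr hn, ENNReal.zero_rpow_of_pos hp0])]
    rw [hT, hS, ENNReal.ofReal_sum_of_nonneg (by
      intro i _
      exact le_of_lt (Real.rpow_pos_of_pos (hv i) _))]
    apply Finset.sum_congr rfl
    intro i hi
    simp only [Finset.mem_range, Nat.lt_succ_iff] at hi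
    have hai : a i = v i ^ (1 - q) := by simp [ha, hi]
    rw [hai, ENNReal.ofReal_rpow_of_pos (Real.rpow_pos_of_pos (hv i) _),
      ← Real.rpow_mul (hv i).le, ← ENNReal.ofReal_mul (hv i).le]
    congr 1
    nth_rewrite 1 [← Real.rpow_one (v i)]
    rw [← Real.rpow_add (hv i), hkey]
  -- LHS lower bound
  have hlow : (∑' i : ℕ, ENNReal.ofReal (u (k + i))) * T ^ p
      ≤ ∑' n : ℕ, ENNReal.ofReal (u n) *
          ENNReal.ofReal (∑ j ∈ Finset.range (n + 1), a j) ^ p := by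
    rw [← ENNReal.tsum_mul_right]
    have hinj : Function.Injective (fun i : ℕ => k + i) := fun i j h => by
      simpa using h
    have := ENNReal.tsum_comp_le_tsum_of_injective hinj
      (fun n => ENNReal.ofReal (u n) *
        ENNReal.ofReal (∑ j ∈ Finset.range (n + 1), a j) ^ p)
    refine le_trans (le_of_eq ?_) this
    apply tsum_congr
    intro i
    simp only [hT]
    rw [hpartial (k + i) (Nat.le_add_right k i)]
  have hmain := hHardy a ha_nonneg
  rw [hRHS] at hmain
  have h1 : ((∑' i : ℕ, ENNReal.ofReal (u (k + i))) * T ^ p) ^ (1 / p)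
      ≤ ENNReal.ofReal C * T ^ (1 / p) :=
    le_trans (ENNReal.rpow_le_rpow hlow (by positivity)) hmain
  rw [ENNReal.mul_rpow_of_nonneg _ _ (by positivity), ← ENNReal.rpow_mul,
    mul_one_div_cancel hpne, ENNReal.rpow_one] at h1
  have hTsplit : T = T ^ (1 / q) * T ^ (1 / p) := by
    rw [← ENNReal.rpow_add _ _ hT0 hTt]
    rw [show 1 / q + 1 / p = 1 by linarith [hpq], ENNReal.rpow_one]
  nth_rewrite 1 [hTsplit] at h1
  rw [← mul_assoc] at h1
  have hc0 : T ^ (1 / p) ≠ 0 := by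
    simp [ENNReal.rpow_eq_zero_iff, hT0, hTt]
  have hct : T ^ (1 / p) ≠ ⊤ := by
    simp [ENNReal.rpow_eq_top_iff, hT0, hTt]
  exact (ENNReal.mul_le_mul_iff_left hc0 hct).mp h1
end

section
/- Let r ∈ (0,1) and a > 0, and set f(t) = r^t (1 + t ln 2)^a. Then there exists k₀ ∈ ℕ such that for all integers k ≥ k₀, sum_{i=k}^∞ r^i (1 + i ln 2)^a ≤ (-2 r^{k-1} / ln r) · (1 + k ln 2)^a. -/
/-- Tail estimate for the series `∑ r^i (1 + i ln 2)^a` with `0 < r < 1`, `a > 0`: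
for all sufficiently large `k`, the tail starting at `k` is bounded by
`(-2 r^{k-1} / ln r) (1 + k ln 2)^a`. -/
theorem tail_estimate_geometric_log (r a : ℝ) (hr0 : 0 < r) (hr1 : r < 1) (ha : 0 < a) :
    ∃ k₀ : ℕ, ∀ k : ℕ, k₀ ≤ k →
      ∑' i : ℕ, r ^ (k + i) * (1 + (↑(k + i) : ℝ) * Real.log 2) ^ a
        ≤ (-2 * r ^ ((k : ℝ) - 1) / Real.log r) * (1 + (k : ℝ) * Real.log 2) ^ a := by
  set L := Real.log 2 with hLdef
  have hL : 0 < L := Real.log_pos one_lt_two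
  have hlr : Real.log r < 0 := Real.log_neg hr0 hr1
  set ρ : ℝ := 1 + r * Real.log r / 2 with hρdef
  have hρ1 : ρ < 1 := by
    have hm : r * Real.log r < 0 := mul_neg_of_pos_of_neg hr0 hlr
    rw [hρdef]; linarith
  have hrinv : -Real.log r < r⁻¹ - 1 := by
    have h := Real.log_lt_sub_one_of_pos (show (0:ℝ) < r⁻¹ by positivity)
      (by
        intro h
        rw [inv_eq_one] at h
        linarith)
    rwa [Real.log_inv] at h
  have hρr : r < ρ := by
    have h := mul_lt_mul_of_pos_left hrinv hr0
    have h2 : r * r⁻¹ = 1 := mul_inv_cancel₀ (ne_of_gt hr0)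
    rw [hρdef]
    nlinarith
  have hρ0 : 0 < ρ := hr0.trans hρr
  set q : ℝ := ρ / r with hqdef
  have hq0 : 0 < q := by positivity
  have hq : 1 < q := (one_lt_div hr0).2 hρr
  set c : ℝ := q ^ (1 / a) with hcdef
  have hc : 1 < c :=
    (Real.one_lt_rpow_iff_of_pos hq0).2 (Or.inl ⟨hq, by positivity⟩)
  refine ⟨⌈1 / (c - 1)⌉₊, fun k hk => ?_⟩
  have hεk : 1 ≤ (c - 1) * (k : ℝ) := by
    have h1 : (1 / (c - 1) : ℝ) ≤ k := le_trans (Nat.le_ceil _) (Nat.cast_le.2 hk)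
    rw [div_le_iff₀ (by linarith)] at h1
    nlinarith
  have h1kL : (0:ℝ) < 1 + (k : ℝ) * L := by positivity
  have hb : 1 + L / (1 + (k : ℝ) * L) ≤ c := by
    have hLe : L ≤ (c - 1) * (1 + (k : ℝ) * L) := by nlinarith
    have h2 : L / (1 + (k : ℝ) * L) ≤ c - 1 := (div_le_iff₀ h1kL).2 hLe
    linarith
  -- pointwise bound on the log factor
  have key : ∀ i : ℕ, 1 + ((k + i : ℕ) : ℝ) * L ≤ (1 + (k : ℝ) * L) * c ^ i := by
    intro i
    have h1 : 1 + (i : ℝ) * (L / (1 + (k : ℝ) * L)) ≤ (1 + L / (1 + (k : ℝ) * L)) ^ i :=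
      one_add_mul_le_pow (le_trans (by norm_num) (div_nonneg hL.le h1kL.le)) i
    have h2 : (1 + L / (1 + (k : ℝ) * L)) ^ i ≤ c ^ i :=
      pow_le_pow_left₀ (by positivity) hb i
    have h3 := mul_le_mul_of_nonneg_left (h1.trans h2) h1kL.le
    have h4 : (1 + (k : ℝ) * L) * (1 + (i : ℝ) * (L / (1 + (k : ℝ) * L)))
        = 1 + ((k : ℝ) + i) * L := by
      field_simp
      ring
    push_cast
    rw [← h4]
    linarith [h3]
  -- raised to power a
  have key2 : ∀ i : ℕ, (1 + ((k + i : ℕ) : ℝ) * L) ^ a ≤ (1 + (k : ℝ) * L) ^ a * q ^ i := by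
    intro i
    have hA : (0:ℝ) ≤ 1 + ((k + i : ℕ) : ℝ) * L := by positivity
    have h := Real.rpow_le_rpow hA (key i) ha.le
    have hcpow : ((c : ℝ) ^ i) ^ a = q ^ i := by
      rw [hcdef, ← Real.rpow_natCast (q ^ (1 / a)) i, ← Real.rpow_mul hq0.le,
        ← Real.rpow_mul hq0.le]
      rw [show 1 / a * (i : ℝ) * a = (i : ℝ) by field_simp]
      exact Real.rpow_natCast q i
    rwa [Real.mul_rpow h1kL.le (by positivity), hcpow] at h
  -- termwise bound
  have key3 : ∀ i : ℕ, r ^ (k + i) * (1 + ((k + i : ℕ) : ℝ) * L) ^ a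
      ≤ ((1 + (k : ℝ) * L) ^ a * r ^ k) * ρ ^ i := by
    intro i
    have h := mul_le_mul_of_nonneg_left (key2 i) (pow_nonneg hr0.le (k + i))
    have heq : r ^ (k + i) * ((1 + (k : ℝ) * L) ^ a * q ^ i)
        = ((1 + (k : ℝ) * L) ^ a * r ^ k) * ρ ^ i := by
      rw [hqdef, div_pow, pow_add]
      field_simp
    linarith [h, heq ▸ h]
  have hsum_g : Summable (fun i : ℕ => ((1 + (k : ℝ) * L) ^ a * r ^ k) * ρ ^ i) :=
    (summable_geometric_of_lt_one hρ0.le hρ1).mul_left _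
  have hsum_f : Summable (fun i : ℕ => r ^ (k + i) * (1 + ((k + i : ℕ) : ℝ) * L) ^ a) :=
    Summable.of_nonneg_of_le (fun i => by positivity) key3 hsum_g
  calc ∑' i : ℕ, r ^ (k + i) * (1 + ((k + i : ℕ) : ℝ) * L) ^ a
      ≤ ∑' i : ℕ, ((1 + (k : ℝ) * L) ^ a * r ^ k) * ρ ^ i :=
        Summable.tsum_le_tsum key3 hsum_f hsum_g
    _ = ((1 + (k : ℝ) * L) ^ a * r ^ k) * (1 - ρ)⁻¹ := by
        rw [tsum_mul_left, tsum_geometric_of_lt_one hρ0.le hρ1]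
    _ = (-2 * r ^ ((k : ℝ) - 1) / Real.log r) * (1 + (k : ℝ) * L) ^ a := by
        have hrk : r ^ ((k : ℝ) - 1) = r ^ k / r := by
          rw [Real.rpow_sub hr0, Real.rpow_natCast, Real.rpow_one]
        rw [hrk, hρdef]
        have hlrne : Real.log r ≠ 0 := ne_of_lt hlr
        field_simp
        ring
end

section
/- Let r̃ > 1 and ã < 0. Then, with g(t) = r̃^t (1 + t ln 2)^{ã}, the limit as k → ∞ of (∫_1^{k+1} r̃^t (1 + t ln 2)^{ã} dt) / (r̃^k (1 + k ln 2)^{ã}) equals r̃ / ln(r̃). -/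
open Filter intervalIntegral

/-- Asymptotics of the integral of `g(t) = r̃^t (1 + t ln 2)^ã` for `r̃ > 1`, `ã < 0`:
the quotient of `∫_1^{k+1} g` by `g(k)` tends to `r̃ / ln r̃` as `k → ∞`. -/
theorem integral_quotient_limit (rt at_ : ℝ) (hrt : 1 < rt) (hat : at_ < 0) :
    Tendsto (fun k : ℝ =>
        (∫ t in (1 : ℝ)..(k + 1), rt ^ t * (1 + t * Real.log 2) ^ at_) /
          (rt ^ k * (1 + k * Real.log 2) ^ at_))
      atTop (nhds (rt / Real.log rt)) := by
  have rt0 : (0:ℝ) < rt := lt_trans one_pos hrt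
  have hL : 0 < Real.log rt := Real.log_pos hrt
  set L : ℝ := Real.log rt with hLdef
  have hl2 : 0 < Real.log 2 := Real.log_pos one_lt_two
  set l2 : ℝ := Real.log 2 with hl2def
  -- basic positivity
  have hbase : ∀ {x : ℝ}, 0 ≤ x → 0 < 1 + x * l2 := by
    intro x hx; nlinarith
  have hpos : ∀ {x : ℝ}, 0 ≤ x → 0 < (1 + x * l2) ^ at_ := by
    intro x hx; exact Real.rpow_pos_of_pos (hbase hx) _
  have hanti : ∀ {s t : ℝ}, 0 ≤ s → s ≤ t → (1 + t * l2) ^ at_ ≤ (1 + s * l2) ^ at_ := by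
    intro s t hs hst
    exact Real.rpow_le_rpow_of_nonpos (hbase hs) (by nlinarith) hat.le
  have hcrt : Continuous fun t : ℝ => rt ^ t :=
    continuous_const.rpow continuous_id fun _ => Or.inl rt0.ne'
  have hsqrt_atTop : Tendsto Real.sqrt atTop atTop :=
    (tendsto_rpow_atTop (by norm_num : (0:ℝ) < 1/2)).congr
      fun x => (Real.sqrt_eq_rpow x).symm
  have htop : Tendsto (fun k : ℝ => 1 + k * l2) atTop atTop :=
    tendsto_atTop_add_const_left _ 1 (tendsto_id.atTop_mul_const hl2)
  -- integrability of the integrand on intervals within [0, ∞)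
  have hcont : ∀ {a b : ℝ}, 0 ≤ a → 0 ≤ b →
      IntervalIntegrable (fun t => rt ^ t * (1 + t * l2) ^ at_)
        MeasureTheory.volume a b := by
    intro a b ha hb
    apply ContinuousOn.intervalIntegrable
    apply hcrt.continuousOn.mul
    apply ContinuousOn.rpow_const
    · exact (continuous_const.add (continuous_id.mul continuous_const)).continuousOn
    · intro x hx
      have hx0 : 0 ≤ x := by
        rcases Set.mem_uIcc.mp hx with ⟨h1, _⟩ | ⟨h1, _⟩ <;> linarith
      exact Or.inl (hbase hx0).ne'
  -- exact integral of rt ^ t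
  have hint : ∀ a b : ℝ, ∫ t in a..b, rt ^ t = (rt ^ b - rt ^ a) / L := by
    intro a b
    have hd : ∀ x ∈ Set.uIcc a b, HasDerivAt (fun y => rt ^ y / L) (rt ^ x) x := by
      intro x _
      have := ((Real.hasStrictDerivAt_const_rpow rt0 x).hasDerivAt).div_const L
      simpa [← hLdef, mul_div_cancel_right₀ _ hL.ne'] using this
    rw [intervalIntegral.integral_eq_sub_of_hasDerivAt hd (hcrt.intervalIntegrable _ _),
      sub_div]
  -- lower bound for the integral
  have hlow : ∀ k : ℝ, 1 ≤ k →
      ((rt ^ (k+1) - rt ^ (1:ℝ)) / L) * (1 + (k+1) * l2) ^ at_ ≤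
        ∫ t in (1:ℝ)..(k+1), rt ^ t * (1 + t * l2) ^ at_ := by
    intro k hk
    have h1k : (1:ℝ) ≤ k + 1 := by linarith
    have hmono := intervalIntegral.integral_mono_on (f := fun t => rt ^ t * (1 + (k+1) * l2) ^ at_)
      (g := fun t => rt ^ t * (1 + t * l2) ^ at_) h1k
      ((hcrt.mul continuous_const).intervalIntegrable _ _)
      (hcont (by norm_num) (by linarith))
      (fun x hx => by
        have hx0 : (0:ℝ) ≤ x := by linarith [hx.1]
        exact mul_le_mul_of_nonneg_left (hanti hx0 hx.2) (Real.rpow_nonneg rt0.le _))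
    calc ((rt ^ (k+1) - rt ^ (1:ℝ)) / L) * (1 + (k+1) * l2) ^ at_
        = ∫ t in (1:ℝ)..(k+1), rt ^ t * (1 + (k+1) * l2) ^ at_ := by
          rw [intervalIntegral.integral_mul_const, hint]
      _ ≤ _ := hmono
  -- √k ≤ k / 2 for k ≥ 4, so 1 ≤ k - √k etc.
  have hsqrt_half : ∀ k : ℝ, 4 ≤ k → Real.sqrt k ≤ k / 2 := by
    intro k hk
    have h0 : (0:ℝ) ≤ k := by linarith
    nlinarith [Real.sq_sqrt h0, Real.sqrt_nonneg k, sq_nonneg (Real.sqrt k - 2)]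
  -- upper bound for the integral
  have hup : ∀ k : ℝ, 4 ≤ k →
      (∫ t in (1:ℝ)..(k+1), rt ^ t * (1 + t * l2) ^ at_) ≤
        ((1 + 1 * l2) ^ at_ * rt ^ (k - Real.sqrt k)
          + (1 + (k - Real.sqrt k) * l2) ^ at_ * rt ^ (k+1)) / L := by
    intro k hk
    set m : ℝ := k - Real.sqrt k with hmdef
    have hm2 : 2 ≤ m := by
      have := hsqrt_half k hk
      simp only [hmdef]; linarith
    have hm1 : (1:ℝ) ≤ m := by linarith
    have hm0 : (0:ℝ) ≤ m := by linarith
    have hmk : m ≤ k + 1 := by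
      have := Real.sqrt_nonneg k
      simp only [hmdef]; linarith
    rw [← intervalIntegral.integral_add_adjacent_intervals (b := m)
      (hcont (by norm_num) hm0) (hcont hm0 (by linarith))]
    have hI1 : (∫ t in (1:ℝ)..m, rt ^ t * (1 + t * l2) ^ at_) ≤
        ((rt ^ m - rt ^ (1:ℝ)) / L) * (1 + 1 * l2) ^ at_ := by
      have := intervalIntegral.integral_mono_on
        (f := fun t => rt ^ t * (1 + t * l2) ^ at_)
        (g := fun t => rt ^ t * (1 + 1 * l2) ^ at_) hm1
        (hcont (by norm_num) hm0)
        ((hcrt.mul continuous_const).intervalIntegrable _ _)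
        (fun x hx => mul_le_mul_of_nonneg_left
          (hanti (by norm_num) hx.1) (Real.rpow_nonneg rt0.le _))
      calc (∫ t in (1:ℝ)..m, rt ^ t * (1 + t * l2) ^ at_)
          ≤ ∫ t in (1:ℝ)..m, rt ^ t * (1 + 1 * l2) ^ at_ := this
        _ = ((rt ^ m - rt ^ (1:ℝ)) / L) * (1 + 1 * l2) ^ at_ := by
            rw [intervalIntegral.integral_mul_const, hint]
    have hI2 : (∫ t in m..(k+1), rt ^ t * (1 + t * l2) ^ at_) ≤
        ((rt ^ (k+1) - rt ^ m) / L) * (1 + m * l2) ^ at_ := by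
      have := intervalIntegral.integral_mono_on
        (f := fun t => rt ^ t * (1 + t * l2) ^ at_)
        (g := fun t => rt ^ t * (1 + m * l2) ^ at_) hmk
        (hcont hm0 (by linarith))
        ((hcrt.mul continuous_const).intervalIntegrable _ _)
        (fun x hx => mul_le_mul_of_nonneg_left
          (hanti hm0 hx.1) (Real.rpow_nonneg rt0.le _))
      calc (∫ t in m..(k+1), rt ^ t * (1 + t * l2) ^ at_)
          ≤ ∫ t in m..(k+1), rt ^ t * (1 + m * l2) ^ at_ := this
        _ = ((rt ^ (k+1) - rt ^ m) / L) * (1 + m * l2) ^ at_ := by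
            rw [intervalIntegral.integral_mul_const, hint]
    have h1pos : (0:ℝ) < rt ^ (1:ℝ) := Real.rpow_pos_of_pos rt0 _
    have hmpos : (0:ℝ) < rt ^ m := Real.rpow_pos_of_pos rt0 _
    have hh1 : (0:ℝ) < (1 + 1 * l2) ^ at_ := hpos (by norm_num)
    have hhm : (0:ℝ) < (1 + m * l2) ^ at_ := hpos hm0
    have key : ((rt ^ m - rt ^ (1:ℝ)) / L) * (1 + 1 * l2) ^ at_
        + ((rt ^ (k+1) - rt ^ m) / L) * (1 + m * l2) ^ at_ ≤
        ((1 + 1 * l2) ^ at_ * rt ^ m + (1 + m * l2) ^ at_ * rt ^ (k+1)) / L := by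
      rw [div_mul_eq_mul_div, div_mul_eq_mul_div, ← add_div, div_le_div_iff_of_pos_right hL]
      nlinarith [mul_pos h1pos hh1, mul_pos hmpos hhm]
    linarith [hI1, hI2, key]
  -- limit building blocks
  have hrpow1 : ContinuousAt (fun x : ℝ => x ^ at_) 1 :=
    Real.continuousAt_rpow_const 1 at_ (Or.inl one_ne_zero)
  -- P3 : (rt ^ k)⁻¹ → 0
  have P3 : Tendsto (fun k : ℝ => (rt ^ k)⁻¹) atTop (nhds 0) := by
    have hexp : Tendsto (fun k : ℝ => Real.exp (Real.log rt * k)) atTop atTop :=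
      Real.tendsto_exp_atTop.comp (Tendsto.const_mul_atTop hL tendsto_id)
    refine hexp.inv_tendsto_atTop.congr fun k => ?_
    simp only [Pi.inv_apply]
    rw [Real.rpow_def_of_pos rt0]
  -- P1 : ratio of h at k+1 and k → 1
  have hP1ratio : Tendsto (fun k : ℝ => (1 + (k+1) * l2) / (1 + k * l2)) atTop (nhds 1) := by
    have h0 : Tendsto (fun k : ℝ => l2 / (1 + k * l2)) atTop (nhds 0) :=
      Tendsto.div_atTop tendsto_const_nhds htop
    have h1 : Tendsto (fun k : ℝ => 1 + l2 / (1 + k * l2)) atTop (nhds 1) := by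
      simpa using tendsto_const_nhds.add h0
    refine Tendsto.congr' ?_ h1
    filter_upwards [eventually_ge_atTop (0:ℝ)] with k hk
    have := (hbase hk).ne'
    field_simp
    ring
  have P1 : Tendsto (fun k : ℝ => (1 + (k+1) * l2) ^ at_ / (1 + k * l2) ^ at_)
      atTop (nhds 1) := by
    have hc := hrpow1.tendsto.comp hP1ratio
    rw [Real.one_rpow] at hc
    refine Tendsto.congr' ?_ hc
    filter_upwards [eventually_ge_atTop (0:ℝ)] with k hk
    simp only [Function.comp]
    rw [Real.div_rpow (hbase (by linarith)).le (hbase hk).le]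
  -- P2 : ratio of h at k - √k and k → 1
  have hsub : Tendsto (fun k : ℝ => Real.sqrt k * l2 / (1 + k * l2)) atTop (nhds 0) := by
    have htop2 : Tendsto (fun k : ℝ => (1 + k * l2) / Real.sqrt k) atTop atTop := by
      refine tendsto_atTop_mono' atTop ?_ (Tendsto.const_mul_atTop hl2 hsqrt_atTop)
      filter_upwards [eventually_ge_atTop (1:ℝ)] with k hk
      have hsk : (0:ℝ) < Real.sqrt k := Real.sqrt_pos.mpr (by linarith)
      rw [le_div_iff₀ hsk]
      nlinarith [Real.mul_self_sqrt (by linarith : (0:ℝ) ≤ k)]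
    have h0 := htop2.inv_tendsto_atTop.const_mul l2
    rw [mul_zero] at h0
    refine Tendsto.congr' ?_ h0
    filter_upwards [eventually_ge_atTop (1:ℝ)] with k hk
    simp only [Pi.inv_apply]
    rw [inv_div]
    ring
  have hP2ratio : Tendsto (fun k : ℝ => (1 + (k - Real.sqrt k) * l2) / (1 + k * l2))
      atTop (nhds 1) := by
    have h1 : Tendsto (fun k : ℝ => 1 - Real.sqrt k * l2 / (1 + k * l2)) atTop (nhds 1) := by
      simpa using tendsto_const_nhds.sub hsub
    refine Tendsto.congr' ?_ h1
    filter_upwards [eventually_ge_atTop (0:ℝ)] with k hk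
    have := (hbase hk).ne'
    field_simp
    ring
  have P2 : Tendsto (fun k : ℝ =>
      (1 + (k - Real.sqrt k) * l2) ^ at_ / (1 + k * l2) ^ at_) atTop (nhds 1) := by
    have hc := hrpow1.tendsto.comp hP2ratio
    rw [Real.one_rpow] at hc
    refine Tendsto.congr' ?_ hc
    filter_upwards [eventually_ge_atTop (4:ℝ)] with k hk
    have hm0 : (0:ℝ) ≤ k - Real.sqrt k := by
      have := hsqrt_half k hk; linarith
    simp only [Function.comp]
    rw [Real.div_rpow (hbase hm0).le (hbase (by linarith)).le]
  -- P4 : the small correction term → 0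
  have P4 : Tendsto (fun k : ℝ =>
      (1 + 1 * l2) ^ at_ * ((1 + k * l2) ^ at_)⁻¹ * (rt ^ Real.sqrt k)⁻¹ / L)
      atTop (nhds 0) := by
    have o : (fun k : ℝ => Real.log (1 + k * l2)) =o[atTop]
        (fun k : ℝ => (1 + k * l2) ^ (1/2 : ℝ)) := by
      have := (isLittleO_log_rpow_atTop (by norm_num : (0:ℝ) < 1/2)).comp_tendsto htop
      simpa [Function.comp_def] using this
    have obig : (fun k : ℝ => (1 + k * l2) ^ (1/2 : ℝ)) =O[atTop] Real.sqrt := by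
      rw [Asymptotics.isBigO_iff]
      refine ⟨Real.sqrt (1 + l2), ?_⟩
      filter_upwards [eventually_ge_atTop (1:ℝ)] with k hk
      have hk0 : (0:ℝ) ≤ k := by linarith
      rw [Real.norm_eq_abs, Real.norm_eq_abs,
        abs_of_nonneg (Real.rpow_nonneg (hbase hk0).le _),
        abs_of_nonneg (Real.sqrt_nonneg _), ← Real.sqrt_eq_rpow]
      calc Real.sqrt (1 + k * l2) ≤ Real.sqrt ((1 + l2) * k) :=
            Real.sqrt_le_sqrt (by nlinarith)
        _ = Real.sqrt (1 + l2) * Real.sqrt k := Real.sqrt_mul (by positivity) k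
    have hdiv : Tendsto (fun k : ℝ => Real.log (1 + k * l2) / Real.sqrt k)
        atTop (nhds 0) := (o.trans_isBigO obig).tendsto_div_nhds_zero
    have hdiv2 : Tendsto (fun k : ℝ => (-at_) * (Real.log (1 + k * l2) / Real.sqrt k))
        atTop (nhds 0) := by simpa using hdiv.const_mul (-at_)
    have hev : ∀ᶠ k in atTop,
        (-at_) * Real.log (1 + k * l2) - L * Real.sqrt k ≤ -((L/2) * Real.sqrt k) := by
      filter_upwards [hdiv2.eventually_lt_const (half_pos hL),
        eventually_ge_atTop (1:ℝ)] with k h1 h2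
      have hsk : (0:ℝ) < Real.sqrt k := Real.sqrt_pos.mpr (by linarith)
      have heq : (-at_) * Real.log (1 + k * l2)
          = ((-at_) * (Real.log (1 + k * l2) / Real.sqrt k)) * Real.sqrt k := by
        field_simp
      rw [heq]
      nlinarith [mul_le_mul_of_nonneg_right h1.le hsk.le]
    have hbot : Tendsto (fun k : ℝ => -((L/2) * Real.sqrt k)) atTop atBot :=
      tendsto_neg_atBot_iff.mpr (Tendsto.const_mul_atTop (half_pos hL) hsqrt_atTop)
    have hE : Tendsto (fun k : ℝ => (-at_) * Real.log (1 + k * l2) - L * Real.sqrt k)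
        atTop atBot := tendsto_atBot_mono' atTop hev hbot
    have hexp : Tendsto (fun k : ℝ =>
        Real.exp ((-at_) * Real.log (1 + k * l2) - L * Real.sqrt k)) atTop (nhds 0) :=
      Real.tendsto_exp_atBot.comp hE
    have hc := hexp.const_mul ((1 + 1 * l2) ^ at_ / L)
    rw [mul_zero] at hc
    refine Tendsto.congr' ?_ hc
    filter_upwards [eventually_ge_atTop (0:ℝ)] with k hk
    rw [hLdef, Real.rpow_def_of_pos (hbase hk), Real.rpow_def_of_pos rt0,
      ← Real.exp_neg, ← Real.exp_neg, mul_assoc, ← Real.exp_add,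
      div_mul_eq_mul_div]
    congr 2
    ring
  -- limits of the explicit bounds
  have hlo_t : Tendsto (fun k : ℝ =>
      ((rt ^ (k+1) - rt ^ (1:ℝ)) / L * (1 + (k+1) * l2) ^ at_) /
        (rt ^ k * (1 + k * l2) ^ at_)) atTop (nhds (rt / L)) := by
    have hnum : Tendsto (fun k : ℝ => (rt - rt * (rt ^ k)⁻¹) / L) atTop (nhds (rt / L)) := by
      have := ((tendsto_const_nhds (x := rt) (f := atTop)).sub (P3.const_mul rt)).div_const L
      simpa using this
    have hmul := P1.mul hnum
    rw [one_mul] at hmul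
    refine Tendsto.congr' ?_ hmul
    filter_upwards [eventually_ge_atTop (1:ℝ)] with k hk
    have hk0 : (0:ℝ) ≤ k := by linarith
    have hrk : (0:ℝ) < rt ^ k := Real.rpow_pos_of_pos rt0 _
    have hhk : (0:ℝ) < (1 + k * l2) ^ at_ := hpos hk0
    rw [Real.rpow_add rt0, Real.rpow_one]
    field_simp
  have hup_t : Tendsto (fun k : ℝ =>
      ((1 + 1 * l2) ^ at_ * rt ^ (k - Real.sqrt k)
        + (1 + (k - Real.sqrt k) * l2) ^ at_ * rt ^ (k+1)) / L /
        (rt ^ k * (1 + k * l2) ^ at_)) atTop (nhds (rt / L)) := by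
    have hadd := P4.add (P2.mul (tendsto_const_nhds (x := rt / L)))
    rw [show (0:ℝ) + 1 * (rt / L) = rt / L by ring] at hadd
    refine Tendsto.congr' ?_ hadd
    filter_upwards [eventually_ge_atTop (4:ℝ)] with k hk
    have hk0 : (0:ℝ) ≤ k := by linarith
    have hrk : (0:ℝ) < rt ^ k := Real.rpow_pos_of_pos rt0 _
    have hrs : (0:ℝ) < rt ^ Real.sqrt k := Real.rpow_pos_of_pos rt0 _
    have hhk : (0:ℝ) < (1 + k * l2) ^ at_ := hpos hk0
    rw [Real.rpow_sub rt0, Real.rpow_add rt0, Real.rpow_one]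
    field_simp
  -- squeeze
  refine tendsto_of_tendsto_of_tendsto_of_le_of_le' hlo_t hup_t ?_ ?_
  · filter_upwards [eventually_ge_atTop (4:ℝ)] with k hk
    have hD : (0:ℝ) < rt ^ k * (1 + k * l2) ^ at_ :=
      mul_pos (Real.rpow_pos_of_pos rt0 _) (hpos (by linarith))
    exact (div_le_div_iff_of_pos_right hD).mpr (hlow k (by linarith))
  · filter_upwards [eventually_ge_atTop (4:ℝ)] with k hk
    have hD : (0:ℝ) < rt ^ k * (1 + k * l2) ^ at_ :=
      mul_pos (Real.rpow_pos_of_pos rt0 _) (hpos (by linarith))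
    exact (div_le_div_iff_of_pos_right hD).mpr (hup k hk)
end

section
/- Let γ ≥ 1, p, q > 1 conjugate, r = 2^{-(γ+1)}, α < 0, a = pα. Then sup_{k≥1} (sum_{i=k}^∞ r^i (1 + i ln 2)^{pα})^{1/p} · (sum_{i=1}^k (r^i (1 + i ln 2)^{pα})^{1-q})^{1/q} < ∞. -/
open Finset

/-- Finiteness of the Andersen–Heinig quantity for the logarithmic weight with negative
exponent `α`: with `r = 2^{-(γ+1)}` and `a = pα < 0`, the supremum over `k ≥ 1` of
`(∑_{i=k}^∞ r^i (1+i ln 2)^{pα})^{1/p} (∑_{i=1}^k (r^i (1+i ln 2)^{pα})^{1-q})^{1/q}`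
is finite. -/
theorem AH_log_weight_finite (γ p q α : ℝ) (hγ : 1 ≤ γ) (hp : 1 < p) (hq : 1 < q)
    (hpq : 1 / p + 1 / q = 1) (hα : α < 0) :
    let r : ℝ := 2 ^ (-(γ + 1))
    ∃ M : ℝ, ∀ k : ℕ, 1 ≤ k →
      (∑' i : ℕ, r ^ (k + i) * (1 + (↑(k + i) : ℝ) * Real.log 2) ^ (p * α)) ^ (1 / p) *
          (∑ i ∈ Finset.Icc 1 k,
            (r ^ i * (1 + (i : ℝ) * Real.log 2) ^ (p * α)) ^ (1 - q)) ^ (1 / q)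
        ≤ M := by
  intro r
  have hr0 : (0:ℝ) < r := Real.rpow_pos_of_pos two_pos _
  have hr1 : r < 1 := Real.rpow_lt_one_of_one_lt_of_neg one_lt_two (by linarith)
  have hL0 : (0:ℝ) < Real.log 2 := Real.log_pos one_lt_two
  set L := Real.log 2 with hLdef
  have hpa : p * α < 0 := mul_neg_of_pos_of_neg (by linarith) hα
  set w : ℕ → ℝ := fun i => (1 + (i:ℝ) * L) ^ (p * α) with hwdef
  have hbase : ∀ i : ℕ, (0:ℝ) < 1 + (i:ℝ) * L := fun i => by positivity
  have hw_pos : ∀ i : ℕ, 0 < w i := fun i => Real.rpow_pos_of_pos (hbase i) _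
  have hw_anti : ∀ i k : ℕ, i ≤ k → w k ≤ w i := by
    intro i k hik
    exact Real.rpow_le_rpow_of_nonpos (hbase i)
      (by have : (i:ℝ) ≤ (k:ℝ) := Nat.cast_le.mpr hik; nlinarith) hpa.le
  set s : ℝ := r ^ (1 - q) with hsdef
  have hs1 : 1 < s := Real.one_lt_rpow_iff_of_pos hr0 |>.mpr (Or.inr ⟨hr1, by linarith⟩)
  have hs0 : 0 < s := lt_trans one_pos hs1
  have hp0 : (0:ℝ) < p := by linarith
  have hq0 : (0:ℝ) < q := by linarith
  refine ⟨((1 - r)⁻¹) ^ (1/p) * (s / (s - 1)) ^ (1/q), ?_⟩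
  intro k hk
  set W := w k with hWdef
  have hW0 : 0 < W := hw_pos k
  -- first factor bound
  have hsum1 : Summable (fun i : ℕ => r ^ (k + i) * w (k + i)) := by
    apply Summable.of_nonneg_of_le (fun i => by positivity)
      (fun i => ?_) (((summable_geometric_of_lt_one hr0.le hr1).mul_left (r ^ k)))
    have hcast : (0:ℝ) ≤ ((k + i : ℕ) : ℝ) := Nat.cast_nonneg _
    have : w (k + i) ≤ 1 := Real.rpow_le_one_of_one_le_of_nonpos
      (by nlinarith [mul_nonneg hcast hL0.le]) hpa.le
    calc r ^ (k + i) * w (k + i) ≤ r ^ (k + i) * 1 :=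
          mul_le_mul_of_nonneg_left this (by positivity)
      _ = r ^ k * r ^ i := by rw [mul_one, pow_add]
  have hbound1 : (∑' i : ℕ, r ^ (k + i) * w (k + i)) ≤ r ^ k * W * (1 - r)⁻¹ := by
    have h1 : (∑' i : ℕ, r ^ (k + i) * w (k + i)) ≤ ∑' i : ℕ, (r ^ k * W) * r ^ i := by
      refine Summable.tsum_le_tsum (fun i => ?_) hsum1
        ((summable_geometric_of_lt_one hr0.le hr1).mul_left _)
      have hwk : w (k + i) ≤ W := hw_anti k (k + i) (Nat.le_add_right _ _)
      calc r ^ (k + i) * w (k + i) ≤ r ^ (k + i) * W :=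
            mul_le_mul_of_nonneg_left hwk (by positivity)
        _ = r ^ k * W * r ^ i := by rw [pow_add]; ring
    rw [tsum_mul_left, tsum_geometric_of_lt_one hr0.le hr1] at h1
    linarith
  -- second factor bound
  have hterm : ∀ i ∈ Finset.Icc 1 k,
      (r ^ i * w i) ^ (1 - q) ≤ W ^ (1 - q) * s ^ i := by
    intro i hi
    have hik : i ≤ k := (Finset.mem_Icc.mp hi).2
    have h1 : (r ^ i * w i) ^ (1 - q) = (r ^ i) ^ (1 - q) * (w i) ^ (1 - q) :=
      Real.mul_rpow (by positivity) (hw_pos i).le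
    have h2 : (r ^ i) ^ (1 - q) = s ^ i := by
      rw [← Real.rpow_natCast r i, ← Real.rpow_natCast s i, hsdef,
        ← Real.rpow_mul hr0.le, ← Real.rpow_mul hr0.le, mul_comm]
    have h3 : (w i) ^ (1 - q) ≤ W ^ (1 - q) :=
      Real.rpow_le_rpow_of_nonpos hW0 (hw_anti i k hik) (by linarith)
    rw [h1, h2, mul_comm]
    exact mul_le_mul_of_nonneg_right h3 (by positivity)
  have hgeom : (∑ i ∈ Finset.Icc 1 k, s ^ i) ≤ s ^ k * (s / (s - 1)) := by
    have hsub : Finset.Icc 1 k ⊆ Finset.range (k + 1) := by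
      intro i hi
      simp only [Finset.mem_Icc] at hi
      simp [Finset.mem_range]; omega
    have h1 : (∑ i ∈ Finset.Icc 1 k, s ^ i) ≤ ∑ i ∈ Finset.range (k + 1), s ^ i :=
      Finset.sum_le_sum_of_subset_of_nonneg hsub (fun i _ _ => by positivity)
    have h2 : (∑ i ∈ Finset.range (k + 1), s ^ i) = (s ^ (k + 1) - 1) / (s - 1) :=
      geom_sum_eq (ne_of_gt hs1) _
    have h3 : (s ^ (k + 1) - 1) / (s - 1) ≤ s ^ (k + 1) / (s - 1) := by
      apply div_le_div_of_nonneg_right ?_ (by linarith) |>.trans_eq rfl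
      · linarith
    calc (∑ i ∈ Finset.Icc 1 k, s ^ i) ≤ (s ^ (k + 1) - 1) / (s - 1) := h1.trans_eq h2
      _ ≤ s ^ (k + 1) / (s - 1) := by
          apply div_le_div_of_nonneg_right (by linarith) (by linarith) |>.trans_eq rfl
      _ = s ^ k * (s / (s - 1)) := by rw [pow_succ]; ring
  have hbound2 : (∑ i ∈ Finset.Icc 1 k, (r ^ i * w i) ^ (1 - q))
      ≤ W ^ (1 - q) * s ^ k * (s / (s - 1)) := by
    calc (∑ i ∈ Finset.Icc 1 k, (r ^ i * w i) ^ (1 - q))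
        ≤ ∑ i ∈ Finset.Icc 1 k, W ^ (1 - q) * s ^ i := Finset.sum_le_sum hterm
      _ = W ^ (1 - q) * ∑ i ∈ Finset.Icc 1 k, s ^ i := by rw [Finset.mul_sum]
      _ ≤ W ^ (1 - q) * (s ^ k * (s / (s - 1))) :=
          mul_le_mul_of_nonneg_left hgeom (by positivity)
      _ = W ^ (1 - q) * s ^ k * (s / (s - 1)) := by ring
  -- combine
  have hsum1nn : 0 ≤ ∑' i : ℕ, r ^ (k + i) * w (k + i) :=
    tsum_nonneg (fun i => by positivity)
  have hsum2nn : 0 ≤ ∑ i ∈ Finset.Icc 1 k, (r ^ i * w i) ^ (1 - q) :=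
    Finset.sum_nonneg (fun i _ => by positivity)
  have hstep : (∑' i : ℕ, r ^ (k + i) * w (k + i)) ^ (1 / p) *
      (∑ i ∈ Finset.Icc 1 k, (r ^ i * w i) ^ (1 - q)) ^ (1 / q)
      ≤ (r ^ k * W * (1 - r)⁻¹) ^ (1 / p) *
        (W ^ (1 - q) * s ^ k * (s / (s - 1))) ^ (1 / q) := by
    have h1r : (0:ℝ) < 1 - r := by linarith
    apply mul_le_mul
    · exact Real.rpow_le_rpow hsum1nn hbound1 (one_div_nonneg.mpr hp0.le)
    · exact Real.rpow_le_rpow hsum2nn hbound2 (one_div_nonneg.mpr hq0.le)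
    · exact Real.rpow_nonneg hsum2nn _
    · exact Real.rpow_nonneg (by positivity) _
  have hkey : (r ^ k * W * (1 - r)⁻¹) ^ (1 / p) *
      (W ^ (1 - q) * s ^ k * (s / (s - 1))) ^ (1 / q)
      = ((1 - r)⁻¹) ^ (1/p) * (s / (s - 1)) ^ (1/q) := by
    have h1r : (0:ℝ) < 1 - r := by linarith
    have hinv : (0:ℝ) ≤ (1 - r)⁻¹ := by positivity
    have hWq : (0:ℝ) ≤ W ^ (1 - q) := (Real.rpow_pos_of_pos hW0 _).le
    have f1 : (r ^ k * W * (1 - r)⁻¹) ^ (1/p)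
        = (r ^ k) ^ (1/p) * W ^ (1/p) * ((1 - r)⁻¹) ^ (1/p) := by
      rw [Real.mul_rpow (mul_nonneg (pow_nonneg hr0.le k) hW0.le) hinv,
        Real.mul_rpow (pow_nonneg hr0.le k) hW0.le]
    have f2 : (W ^ (1 - q) * s ^ k * (s / (s - 1))) ^ (1/q)
        = (W ^ (1 - q)) ^ (1/q) * (s ^ k) ^ (1/q) * (s / (s - 1)) ^ (1/q) := by
      rw [Real.mul_rpow (mul_nonneg hWq (pow_nonneg hs0.le k))
        (div_nonneg hs0.le (by linarith)), Real.mul_rpow hWq (pow_nonneg hs0.le k)]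
    rw [f1, f2]
    have e1 : (r ^ k) ^ (1/p) * (s ^ k) ^ (1/q) = 1 := by
      rw [← Real.rpow_natCast r k, ← Real.rpow_natCast s k, hsdef,
        ← Real.rpow_mul hr0.le, ← Real.rpow_mul hr0.le, ← Real.rpow_mul hr0.le,
        ← Real.rpow_add hr0]
      have : (k:ℝ) * (1/p) + (1 - q) * (k:ℝ) * (1/q) = (k:ℝ) * (1/p + 1/q - 1) := by
        field_simp; ring
      rw [this, hpq]
      simp
    have e2 : W ^ (1/p) * (W ^ (1 - q)) ^ (1/q) = 1 := by
      rw [← Real.rpow_mul hW0.le, ← Real.rpow_add hW0]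
      have : 1/p + (1 - q) * (1/q) = 1/p + 1/q - 1 := by field_simp; ring
      rw [this, hpq]
      simp
    calc (r ^ k) ^ (1/p) * W ^ (1/p) * ((1 - r)⁻¹) ^ (1/p) *
        ((W ^ (1 - q)) ^ (1/q) * (s ^ k) ^ (1/q) * (s / (s - 1)) ^ (1/q))
        = ((r ^ k) ^ (1/p) * (s ^ k) ^ (1/q)) * (W ^ (1/p) * (W ^ (1 - q)) ^ (1/q)) *
          (((1 - r)⁻¹) ^ (1/p) * (s / (s - 1)) ^ (1/q)) := by ring
      _ = ((1 - r)⁻¹) ^ (1/p) * (s / (s - 1)) ^ (1/q) := by rw [e1, e2]; ring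
  exact le_of_le_of_eq hstep hkey
end
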